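/- arXiv:1308.1652 — 10 statements merged into one kernel-verified Lean document; each statement's English description precedes it below -/
import Mathlib

section
/- If n ≥ 3 is odd, then q(F_n) = (n + 2 + √((n-2)² + 8))/2. -/
open SimpleGraph

/-- The signless Laplacian matrix `Q(G) = D(G) + A(G)` of a finite simple graph. -/
noncomputable def signlessLaplacian {V : Type*} [Fintype V] [DecidableEq V]
    (G : SimpleGraph V) : Matrix V V ℝ :=
  letI := Classical.decRel G.Adj
  Matrix.diagonal (fun v => (G.degree v : ℝ)) + G.adjMatrix ℝ

/-- The `Q`-index of a graph: the largest eigenvalue of its signless Laplacian. -/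
noncomputable def qIndex {V : Type*} [Fintype V] [DecidableEq V]
    (G : SimpleGraph V) : ℝ :=
  sSup (spectrum ℝ (signlessLaplacian G))

/-- `H` is contained in `G` as a (not necessarily induced) subgraph. -/
def ContainsCopy {α β : Type*} (H : SimpleGraph α) (G : SimpleGraph β) : Prop :=
  ∃ f : α ↪ β, ∀ ⦃a b⦄, H.Adj a b → G.Adj (f a) (f b)

/-- The friendship-type graph `F_n`: vertex `0` is dominating; the remaining
vertices are paired `(1,2), (3,4), …`; for even `n` the last vertex is a pendant. -/
def friendshipGraph (n : ℕ) : SimpleGraph (Fin n) where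
  Adj i j := i ≠ j ∧ (i.val = 0 ∨ j.val = 0 ∨ (i.val + 1) / 2 = (j.val + 1) / 2)
  symm := by
    constructor
    intro i j ⟨h1, h2⟩
    exact ⟨h1.symm, by tauto⟩
  loopless := by
    constructor
    intro i ⟨h1, _⟩
    exact h1 rfl

/-- The graph `S_{n,k} = K_k ∨ \overline{K}_{n-k}`: the first `k` vertices form a
complete graph joined to an independent set on the remaining `n - k` vertices. -/
def sGraph (n k : ℕ) : SimpleGraph (Fin n) where
  Adj i j := i ≠ j ∧ (i.val < k ∨ j.val < k)
  symm := by
    constructor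
    intro i j ⟨h1, h2⟩
    exact ⟨h1.symm, h2.symm⟩
  loopless := by
    constructor
    intro i ⟨h1, _⟩
    exact h1 rfl

/-- The number of edges of `G` with one endpoint in `X` and the other in `Y`
(counted as ordered pairs in `X × Y`; for disjoint `X`, `Y` this is `e(X,Y)`). -/
noncomputable def edgesBetween {V : Type*} [Fintype V] [DecidableEq V]
    (G : SimpleGraph V) (X Y : Finset V) : ℕ :=
  letI := Classical.decRel G.Adj
  ((X ×ˢ Y).filter fun p => G.Adj p.1 p.2).card

/-- The number of edges of `G` with both endpoints in `X`. -/
noncomputable def edgesWithin {V : Type*} [Fintype V] [DecidableEq V]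
    (G : SimpleGraph V) (X : Finset V) : ℕ :=
  edgesBetween G X X / 2

private lemma mem_spectrum_iff_exists' {n : Type*} [Fintype n] [DecidableEq n]
    (M : Matrix n n ℝ) (μ : ℝ) :
    μ ∈ spectrum ℝ M ↔ ∃ v : n → ℝ, v ≠ 0 ∧ M.mulVec v = μ • v := by
  have h2 : ∀ v : n → ℝ, (algebraMap ℝ (Matrix n n ℝ) μ - M).mulVec v
      = μ • v - M.mulVec v := by
    intro v
    rw [Matrix.sub_mulVec]
    congr 1
    ext i
    simp [Matrix.algebraMap_eq_diagonal, Matrix.mulVec_diagonal]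
  rw [spectrum.mem_iff, Matrix.isUnit_iff_isUnit_det, isUnit_iff_ne_zero, not_not,
    ← Matrix.exists_mulVec_eq_zero_iff]
  constructor
  · rintro ⟨v, hv, h⟩
    rw [h2, sub_eq_zero] at h
    exact ⟨v, hv, h.symm⟩
  · rintro ⟨v, hv, h⟩
    exact ⟨v, hv, by rw [h2, h, sub_self]⟩

private def pvAux (m : ℕ) : ℕ := if m % 2 = 1 then m + 1 else m - 1

private lemma pvAux_spec {n m : ℕ} (hodd : Odd n) (h0 : 0 < m) (h : m < n) :
    pvAux m < n ∧ pvAux m ≠ 0 ∧ pvAux m ≠ m ∧ (m + 1) / 2 = (pvAux m + 1) / 2 := by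
  obtain ⟨k, rfl⟩ := hodd
  unfold pvAux; split <;> omega

private lemma pvAux_invol {m : ℕ} (h0 : 0 < m) : pvAux (pvAux m) = m := by
  unfold pvAux
  by_cases h : m % 2 = 1
  · rw [if_pos h, if_neg (by omega)]; omega
  · rw [if_neg h, if_pos (by omega)]; omega

private lemma adj_ne_zero {n : ℕ} (hodd : Odd n) {i : Fin n} (hi : i.val ≠ 0) (j : Fin n) :
    (friendshipGraph n).Adj i j ↔ j.val = 0 ∨ j.val = pvAux i.val := by
  obtain ⟨k, hk⟩ := hodd
  have hiv := i.isLt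
  have hjv := j.isLt
  constructor
  · rintro ⟨hne, h⟩
    have hne' : i.val ≠ j.val := fun hh => hne (Fin.ext hh)
    unfold pvAux
    rcases h with h | h | h
    · omega
    · omega
    · split <;> omega
  · intro h
    have hval : i.val ≠ j.val := by
      unfold pvAux at h; split at h <;> omega
    refine ⟨fun hh => hval (congrArg Fin.val hh), ?_⟩
    rcases h with h | h
    · exact Or.inr (Or.inl h)
    · refine Or.inr (Or.inr ?_)
      unfold pvAux at h; split at h <;> omega

private lemma adj_zero {n : ℕ} (hn : 0 < n) (j : Fin n) :
    (friendshipGraph n).Adj ⟨0, hn⟩ j ↔ j ≠ ⟨0, hn⟩ := by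
  constructor
  · rintro ⟨hne, _⟩; exact hne.symm
  · intro h; exact ⟨h.symm, Or.inl rfl⟩

private def pf {n : ℕ} (hodd : Odd n) (i : Fin n) : Fin n :=
  if h : i.val = 0 then i
  else ⟨pvAux i.val, (pvAux_spec hodd (Nat.pos_of_ne_zero h) i.isLt).1⟩

private lemma pf_val {n : ℕ} (hodd : Odd n) {i : Fin n} (hi : i.val ≠ 0) :
    (pf hodd i).val = pvAux i.val := by
  unfold pf; rw [dif_neg hi]

private lemma pf_val_ne_zero {n : ℕ} (hodd : Odd n) {i : Fin n} (hi : i.val ≠ 0) :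
    (pf hodd i).val ≠ 0 := by
  rw [pf_val hodd hi]
  exact (pvAux_spec hodd (Nat.pos_of_ne_zero hi) i.isLt).2.1

private lemma pf_pf {n : ℕ} (hodd : Odd n) {i : Fin n} (hi : i.val ≠ 0) :
    pf hodd (pf hodd i) = i := by
  apply Fin.ext
  rw [pf_val hodd (pf_val_ne_zero hodd hi), pf_val hodd hi]
  exact pvAux_invol (Nat.pos_of_ne_zero hi)

/-- For odd `n ≥ 3`, `q(F_n) = (n + 2 + √((n-2)² + 8)) / 2`. -/
theorem stmt_1 (n : ℕ) (hn : 3 ≤ n) (hodd : Odd n) :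
    qIndex (friendshipGraph n)
      = ((n : ℝ) + 2 + Real.sqrt (((n : ℝ) - 2) ^ 2 + 8)) / 2 := by
  letI : DecidableRel (friendshipGraph n).Adj := Classical.decRel (friendshipGraph n).Adj
  have hnpos : 0 < n := by omega
  set s : ℝ := Real.sqrt (((n : ℝ) - 2) ^ 2 + 8) with hsdef
  have hs0 : 0 ≤ s := Real.sqrt_nonneg _
  have hs2 : s ^ 2 = ((n : ℝ) - 2) ^ 2 + 8 := Real.sq_sqrt (by positivity)
  set θ : ℝ := ((n : ℝ) + 2 + s) / 2 with hθdef
  have hn3 : (3 : ℝ) ≤ (n : ℝ) := by exact_mod_cast hn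
  have hθ3 : 3 < θ := by nlinarith [hs0, hs2, hθdef]
  have hθhalf : ((n : ℝ) + 2) / 2 ≤ θ := by rw [hθdef]; linarith
  have hθq : θ ^ 2 - ((n : ℝ) + 2) * θ + 2 * ((n : ℝ) - 1) = 0 := by
    rw [hθdef]; linear_combination hs2 / 4
  set z : Fin n := ⟨0, hnpos⟩ with hzdef
  -- neighbor sets
  have hNz : (friendshipGraph n).neighborFinset z = Finset.univ.erase z := by
    ext j
    rw [SimpleGraph.mem_neighborFinset, adj_zero hnpos, Finset.mem_erase]
    simp [hzdef]
  have hdzcast : (((friendshipGraph n).degree z : ℕ) : ℝ) = (n : ℝ) - 1 := by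
    have hd : (friendshipGraph n).degree z = n - 1 := by
      show ((friendshipGraph n).neighborFinset z).card = n - 1
      rw [hNz, Finset.card_erase_of_mem (Finset.mem_univ z), Finset.card_univ,
        Fintype.card_fin]
    rw [hd]
    push_cast [Nat.cast_sub (by omega : 1 ≤ n)]
    ring
  have hzne : ∀ i : Fin n, i.val ≠ 0 → z ≠ pf hodd i := by
    intro i hi h
    exact pf_val_ne_zero hodd hi (by rw [← h])
  have hNi : ∀ i : Fin n, i.val ≠ 0 →
      (friendshipGraph n).neighborFinset i = {z, pf hodd i} := by
    intro i hi
    ext j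
    rw [SimpleGraph.mem_neighborFinset, adj_ne_zero hodd hi, Finset.mem_insert,
      Finset.mem_singleton]
    constructor
    · rintro (h | h)
      · left; exact Fin.ext h
      · right; exact Fin.ext (by rw [pf_val hodd hi]; exact h)
    · rintro (rfl | rfl)
      · left; rfl
      · right; exact pf_val hodd hi
  have hdeg2cast : ∀ i : Fin n, i.val ≠ 0 →
      (((friendshipGraph n).degree i : ℕ) : ℝ) = 2 := by
    intro i hi
    have hd : (friendshipGraph n).degree i = 2 := by
      show ((friendshipGraph n).neighborFinset i).card = 2
      rw [hNi i hi, Finset.card_insert_of_notMem (by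
        rw [Finset.mem_singleton]; exact hzne i hi), Finset.card_singleton]
    rw [hd]; norm_num
  -- mulVec formula
  have hQm : ∀ (v : Fin n → ℝ) (i : Fin n),
      (signlessLaplacian (friendshipGraph n)).mulVec v i
        = (((friendshipGraph n).degree i : ℕ) : ℝ) * v i
          + ∑ j ∈ (friendshipGraph n).neighborFinset i, v j := by
    intro v i
    show (Matrix.diagonal (fun v => (((friendshipGraph n).degree v : ℕ) : ℝ))
        + (friendshipGraph n).adjMatrix ℝ).mulVec v i = _
    rw [Matrix.add_mulVec]
    simp [Matrix.mulVec_diagonal, SimpleGraph.adjMatrix_mulVec_apply]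
  -- θ is an eigenvalue
  have hθmem : θ ∈ spectrum ℝ (signlessLaplacian (friendshipGraph n)) := by
    rw [mem_spectrum_iff_exists']
    refine ⟨fun j => if j = z then θ - 3 else 1, ?_, ?_⟩
    · intro h
      have h1 := congrFun h ⟨1, by omega⟩
      have hne : (⟨1, by omega⟩ : Fin n) ≠ z := by
        intro hh
        exact absurd (congrArg Fin.val hh) (by simp [hzdef])
      simp only [if_neg hne, Pi.zero_apply] at h1
      norm_num at h1
    · funext i
      rw [hQm]
      by_cases hi : i = z
      · subst hi
        rw [hNz, hdzcast]
        have hsum : ∑ j ∈ Finset.univ.erase z,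
            (if j = z then θ - 3 else (1 : ℝ)) = (n : ℝ) - 1 := by
          rw [Finset.sum_congr rfl
            (fun j hj => if_neg (Finset.mem_erase.mp hj).1),
            Finset.sum_const, Finset.card_erase_of_mem (Finset.mem_univ z),
            Finset.card_univ, Fintype.card_fin, nsmul_eq_mul, mul_one,
            Nat.cast_sub (by omega : 1 ≤ n), Nat.cast_one]
        rw [hsum]
        simp only [if_pos rfl, if_true, eq_self_iff_true, Pi.smul_apply, smul_eq_mul]
        linear_combination -hθq
      · have hiv : i.val ≠ 0 := fun h => hi (Fin.ext h)
        rw [hNi i hiv, Finset.sum_pair (hzne i hiv), hdeg2cast i hiv]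
        have hpfz : pf hodd i ≠ z := fun h => hzne i hiv h.symm
        simp only [if_pos rfl, if_true, eq_self_iff_true, if_neg hi, if_neg hpfz, Pi.smul_apply, smul_eq_mul]
        ring
  -- upper bound
  have hub : ∀ μ ∈ spectrum ℝ (signlessLaplacian (friendshipGraph n)), μ ≤ θ := by
    intro μ hμ
    obtain ⟨v, hv0, hv⟩ := (mem_spectrum_iff_exists' _ _).mp hμ
    have hvz : ∀ i : Fin n, i.val ≠ 0 →
        2 * v i + (v z + v (pf hodd i)) = μ * v i := by
      intro i hi
      have h := congrFun hv i
      rw [hQm, hNi i hi, Finset.sum_pair (hzne i hi), hdeg2cast i hi] at h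
      simpa using h
    have hE0 : ((n : ℝ) - 1) * v z + ∑ j ∈ Finset.univ.erase z, v j = μ * v z := by
      have h := congrFun hv z
      rw [hQm, hNz, hdzcast] at h
      simpa using h
    by_cases hμ1 : μ = 1
    · linarith
    by_cases hμ3 : μ = 3
    · linarith
    have key : ∀ i : Fin n, i.val ≠ 0 → (μ - 3) * v i = v z := by
      intro i hi
      have h1 := hvz i hi
      have h2 := hvz (pf hodd i) (pf_val_ne_zero hodd hi)
      rw [pf_pf hodd hi] at h2
      have heq : v i = v (pf hodd i) := by
        have hm : (μ - 1) * (v i - v (pf hodd i)) = 0 := by linear_combination h2 - h1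
        rcases mul_eq_zero.mp hm with h | h
        · exact absurd (by linarith) hμ1
        · linarith
      linear_combination -h1 - heq
    have hvzne : v z ≠ 0 := by
      intro h0
      apply hv0
      funext i
      by_cases hi : i.val = 0
      · have hiz : i = z := Fin.ext hi
        rw [hiz, h0]; rfl
      · have hk := key i hi
        rw [h0] at hk
        have hvi : v i = 0 := by
          rcases mul_eq_zero.mp hk with h | h
          · exact absurd (by linarith) hμ3
          · exact h
        simpa using hvi
    have hsum : (μ - 3) * (∑ j ∈ Finset.univ.erase z, v j) = ((n : ℝ) - 1) * v z := by
      rw [Finset.mul_sum, Finset.sum_congr rfl (fun j hj => key j (by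
          intro hz0
          exact (Finset.mem_erase.mp hj).1 (Fin.ext hz0))),
        Finset.sum_const, Finset.card_erase_of_mem (Finset.mem_univ z),
        Finset.card_univ, Fintype.card_fin, nsmul_eq_mul,
        Nat.cast_sub (by omega : 1 ≤ n), Nat.cast_one]
    have hquad : μ ^ 2 - ((n : ℝ) + 2) * μ + 2 * ((n : ℝ) - 1) = 0 := by
      have h2 : (μ ^ 2 - ((n : ℝ) + 2) * μ + 2 * ((n : ℝ) - 1)) * v z = 0 := by
        linear_combination (3 - μ) * hE0 + hsum
      exact (mul_eq_zero.mp h2).resolve_right hvzne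
    have hfac : (μ - θ) * (μ + θ - ((n : ℝ) + 2)) = 0 := by
      linear_combination hquad - hθq
    rcases mul_eq_zero.mp hfac with h | h
    · linarith
    · linarith
  have hg : IsGreatest (spectrum ℝ (signlessLaplacian (friendshipGraph n))) θ :=
    ⟨hθmem, hub⟩
  exact hg.csSup_eq
end

section
/- If n ≥ 4 is even, then q(F_n) is the largest real root of the polynomial equation x³ - (n+3)x² + 3nx - 2n + 4 = 0; that is, q(F_n)³ - (n+3)q(F_n)² + 3n·q(F_n) - 2n + 4 = 0, and every real root x of this polynomial satisfies x ≤ q(F_n). -/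
open SimpleGraph

open Matrix Finset

namespace Stmt3Aux

lemma mem_spectrum_iff' {N : ℕ} (M : Matrix (Fin N) (Fin N) ℝ) (lam : ℝ) :
    lam ∈ spectrum ℝ M ↔ ∃ v : Fin N → ℝ, v ≠ 0 ∧ M.mulVec v = lam • v := by
  rw [spectrum.mem_iff, Matrix.isUnit_iff_isUnit_det, isUnit_iff_ne_zero, not_not,
      ← Matrix.exists_mulVec_eq_zero_iff]
  have key : ∀ v : Fin N → ℝ, (algebraMap ℝ (Matrix (Fin N) (Fin N) ℝ) lam - M) *ᵥ v
      = lam • v - M *ᵥ v := by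
    intro v
    rw [Matrix.sub_mulVec]
    congr 1
    ext i
    simp [Matrix.algebraMap_matrix_apply, Matrix.mulVec, dotProduct, ite_mul,
      Finset.sum_ite_eq]
  constructor
  · rintro ⟨v, hv, h⟩
    refine ⟨v, hv, ?_⟩
    rw [key, sub_eq_zero] at h
    exact h.symm
  · rintro ⟨v, hv, h⟩
    exact ⟨v, hv, by rw [key, h, sub_self]⟩

def ptn (i : ℕ) : ℕ := i - 1 + 2 * (i % 2)

lemma fg_adj_iff {n : ℕ} (i j : Fin n) :
    (friendshipGraph n).Adj i j ↔ i ≠ j ∧ (i.val = 0 ∨ j.val = 0 ∨ (i.val + 1) / 2 = (j.val + 1) / 2) :=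
  Iff.rfl

section
variable {n : ℕ}

lemma nbz (h0 : 0 < n) [inst : DecidableRel (friendshipGraph n).Adj] :
    (friendshipGraph n).neighborFinset ⟨0, h0⟩ = univ.erase ⟨0, h0⟩ := by
  ext j
  simp only [mem_neighborFinset, fg_adj_iff, mem_erase, mem_univ, and_true, ne_eq, Fin.ext_iff,
    true_or]
  omega

lemma nbe (hn : 4 ≤ n) (heven : Even n) (he : n - 1 < n) (h0 : 0 < n)
    [inst : DecidableRel (friendshipGraph n).Adj] :
    (friendshipGraph n).neighborFinset ⟨n - 1, he⟩ = {⟨0, h0⟩} := by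
  obtain ⟨m, rfl⟩ := heven
  ext j
  have hj := j.isLt
  simp only [mem_neighborFinset, fg_adj_iff, mem_singleton, Fin.ext_iff, ne_eq]
  obtain ⟨k, hk | hk⟩ : ∃ k, (j : ℕ) = 2*k ∨ (j : ℕ) = 2*k+1 := ⟨(j : ℕ)/2, by omega⟩ <;> omega

lemma nbp (hn : 4 ≤ n) (heven : Even n) {i : Fin n} (h1 : 1 ≤ i.val) (h2 : i.val ≤ n - 2)
    (h0 : 0 < n) (hp : ptn i.val < n)
    [inst : DecidableRel (friendshipGraph n).Adj] :
    (friendshipGraph n).neighborFinset i = {⟨0, h0⟩, ⟨ptn i.val, hp⟩} := by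
  obtain ⟨m, rfl⟩ := heven
  ext j
  have hj := j.isLt
  have hi := i.isLt
  have hptn : ptn i.val = i.val - 1 + 2 * (i.val % 2) := rfl
  simp only [mem_neighborFinset, fg_adj_iff, mem_insert, mem_singleton, Fin.ext_iff, ne_eq, hptn]
  obtain ⟨k, hk | hk⟩ : ∃ k, (i : ℕ) = 2*k+1 ∨ (i : ℕ) = 2*k+2 := ⟨((i : ℕ)-1)/2, by omega⟩ <;>
    rw [hk] <;> omega

lemma ptn_bounds (hn : 4 ≤ n) (heven : Even n) {i : ℕ} (h1 : 1 ≤ i) (h2 : i ≤ n - 2) :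
    1 ≤ ptn i ∧ ptn i ≤ n - 2 ∧ ptn i ≠ i ∧ ptn (ptn i) = i ∧ ptn i ≠ n - 1 ∧ ptn i ≠ 0 ∧ ptn i < n := by
  obtain ⟨m, rfl⟩ := heven
  simp only [ptn]
  omega

lemma fg_mulVec [inst : DecidableRel (friendshipGraph n).Adj] (v : Fin n → ℝ) (i : Fin n) :
    (Matrix.diagonal (fun v => ((friendshipGraph n).degree v : ℝ)) + (friendshipGraph n).adjMatrix ℝ).mulVec v i
      = ((friendshipGraph n).degree i : ℝ) * v i + ∑ j ∈ (friendshipGraph n).neighborFinset i, v j := by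
  rw [Matrix.add_mulVec, Pi.add_apply, Matrix.mulVec_diagonal, adjMatrix_mulVec_apply]

lemma fg_deg_z (h0 : 0 < n) [inst : DecidableRel (friendshipGraph n).Adj] :
    (friendshipGraph n).degree ⟨0, h0⟩ = n - 1 := by
  rw [← card_neighborFinset_eq_degree, nbz h0, card_erase_of_mem (mem_univ _), card_univ,
    Fintype.card_fin]

lemma fg_deg_e (hn : 4 ≤ n) (heven : Even n) (he : n - 1 < n) (h0 : 0 < n)
    [inst : DecidableRel (friendshipGraph n).Adj] :
    (friendshipGraph n).degree ⟨n - 1, he⟩ = 1 := by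
  rw [← card_neighborFinset_eq_degree, nbe hn heven he h0, card_singleton]

lemma fg_deg_p (hn : 4 ≤ n) (heven : Even n) {i : Fin n} (h1 : 1 ≤ i.val) (h2 : i.val ≤ n - 2)
    (h0 : 0 < n) (hp : ptn i.val < n) [inst : DecidableRel (friendshipGraph n).Adj] :
    (friendshipGraph n).degree i = 2 := by
  rw [← card_neighborFinset_eq_degree, nbp hn heven h1 h2 h0 hp]
  rw [card_insert_of_notMem, card_singleton]
  simp only [mem_singleton, Fin.ext_iff, ne_eq]
  have := (ptn_bounds hn heven h1 h2).2.2.2.2.2.1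
  omega

lemma sum_erase_z (hn : 4 ≤ n) (h0 : 0 < n) (he : n - 1 < n) (f : Fin n → ℝ) (c : ℝ)
    (hc : ∀ j : Fin n, j.val ≠ 0 → j.val ≠ n - 1 → f j = c) :
    ∑ j ∈ univ.erase ⟨0, h0⟩, f j = f ⟨n - 1, he⟩ + ((n : ℝ) - 2) * c := by
  have hmem : (⟨n - 1, he⟩ : Fin n) ∈ univ.erase ⟨0, h0⟩ := by
    simp [Fin.ext_iff]; omega
  rw [← Finset.add_sum_erase _ f hmem]
  congr 1
  have hcard : ((univ.erase (⟨0, h0⟩ : Fin n)).erase ⟨n - 1, he⟩).card = n - 2 := by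
    rw [card_erase_of_mem hmem, card_erase_of_mem (mem_univ _), card_univ, Fintype.card_fin]
    omega
  rw [Finset.sum_congr rfl (fun j hj => ?_), Finset.sum_const, hcard, nsmul_eq_mul]
  · congr 1
    push_cast [Nat.cast_sub (by omega : 2 ≤ n)]
    ring
  · simp only [mem_erase, Fin.ext_iff, ne_eq] at hj
    exact hc j hj.2.1 hj.1

/-- Direction A: every root of the cubic is in the spectrum. -/
lemma root_in_spectrum (hn : 4 ≤ n) (heven : Even n) (lam : ℝ)
    (hc : lam ^ 3 - ((n : ℝ) + 3) * lam ^ 2 + 3 * (n : ℝ) * lam - 2 * (n : ℝ) + 4 = 0) :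
    lam ∈ spectrum ℝ (signlessLaplacian (friendshipGraph n)) := by
  letI inst : DecidableRel (friendshipGraph n).Adj := Classical.decRel _
  have h0 : 0 < n := by omega
  have he : n - 1 < n := by omega
  have hn4 : (4 : ℝ) ≤ (n : ℝ) := by exact_mod_cast hn
  have hlam3 : lam ≠ 3 := by
    rintro rfl
    nlinarith [hc]
  set w : Fin n → ℝ := fun i =>
    if i.val = 0 then (lam - 1) * (lam - 3) else if i.val = n - 1 then lam - 3 else lam - 1 with hw
  have hwz : w ⟨0, h0⟩ = (lam - 1) * (lam - 3) := by
    show (if (0 : ℕ) = 0 then _ else _) = _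
    rw [if_pos rfl]
  have hwe : w ⟨n - 1, he⟩ = lam - 3 := by
    show (if n - 1 = 0 then _ else if n - 1 = n - 1 then _ else _) = _
    rw [if_neg (by omega), if_pos rfl]
  have hwp : ∀ j : Fin n, j.val ≠ 0 → j.val ≠ n - 1 → w j = lam - 1 := by
    intro j hj1 hj2
    show (if _ then _ else if _ then _ else _) = _
    rw [if_neg hj1, if_neg hj2]
  rw [mem_spectrum_iff']
  refine ⟨w, ?_, ?_⟩
  · intro hzero
    have : w ⟨n - 1, he⟩ = 0 := by rw [hzero]; rfl
    rw [hwe] at this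
    exact hlam3 (by linarith)
  · funext i
    simp only [signlessLaplacian]
    rw [fg_mulVec]
    by_cases hi0 : i.val = 0
    · have hieq : i = ⟨0, h0⟩ := Fin.ext hi0
      subst hieq
      rw [fg_deg_z, nbz, sum_erase_z hn h0 he w (lam - 1) hwp,
        hwz, hwe, Pi.smul_apply, hwz, smul_eq_mul]
      push_cast [Nat.cast_sub (by omega : 1 ≤ n)]
      linear_combination -hc
    · by_cases hie : i.val = n - 1
      · have hieq : i = ⟨n - 1, he⟩ := Fin.ext hie
        subst hieq
        rw [fg_deg_e hn heven he h0, nbe hn heven he h0, Finset.sum_singleton,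
          hwz, hwe, Pi.smul_apply, hwe, smul_eq_mul]
        push_cast
        ring
      · have h1 : 1 ≤ i.val := by omega
        have h2 : i.val ≤ n - 2 := by
          have := i.isLt; omega
        obtain ⟨hb1, hb2, hb3, hb4, hb5, hb6, hb7⟩ := ptn_bounds hn heven h1 h2
        rw [fg_deg_p hn heven h1 h2 h0 hb7, nbp hn heven h1 h2 h0 hb7,
          Finset.sum_pair (by simp only [ne_eq, Fin.ext_iff]; omega),
          hwz, hwp ⟨ptn i.val, hb7⟩ (by simpa using hb6) (by simpa using hb5),
          Pi.smul_apply, hwp i hi0 hie, smul_eq_mul]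
        push_cast
        ring

/-- Direction B: the top eigenvalue satisfies the cubic, provided it is `> 3`. -/
lemma top_satisfies (hn : 4 ≤ n) (heven : Even n) (q : ℝ) (hq3 : 3 < q)
    (hq : q ∈ spectrum ℝ (signlessLaplacian (friendshipGraph n))) :
    q ^ 3 - ((n : ℝ) + 3) * q ^ 2 + 3 * (n : ℝ) * q - 2 * (n : ℝ) + 4 = 0 := by
  letI inst : DecidableRel (friendshipGraph n).Adj := Classical.decRel _
  have h0 : 0 < n := by omega
  have he : n - 1 < n := by omega
  have hq1 : q - 1 ≠ 0 := by linarith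
  have hq3' : q - 3 ≠ 0 := by linarith
  rw [mem_spectrum_iff'] at hq
  obtain ⟨v, hv, hMv⟩ := hq
  have hrow : ∀ i : Fin n, ((friendshipGraph n).degree i : ℝ) * v i
      + ∑ j ∈ (friendshipGraph n).neighborFinset i, v j = q * v i := by
    intro i
    have := congrFun hMv i
    simp only [signlessLaplacian] at this
    rw [fg_mulVec] at this
    rw [this, Pi.smul_apply, smul_eq_mul]
  -- pendant equation
  have hrowe := hrow ⟨n - 1, he⟩
  rw [fg_deg_e hn heven he h0, nbe hn heven he h0, Finset.sum_singleton] at hrowe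
  -- pair equations
  have hpair : ∀ i : Fin n, 1 ≤ i.val → i.val ≤ n - 2 → (q - 3) * v i = v ⟨0, h0⟩ := by
    intro i h1 h2
    obtain ⟨hb1, hb2, hb3, hb4, hb5, hb6, hb7⟩ := ptn_bounds hn heven h1 h2
    have hri := hrow i
    rw [fg_deg_p hn heven h1 h2 h0 hb7, nbp hn heven h1 h2 h0 hb7,
      Finset.sum_pair (by simp only [ne_eq, Fin.ext_iff]; omega)] at hri
    have hrp := hrow ⟨ptn i.val, hb7⟩
    have hb7' : ptn (ptn i.val) < n := by rw [hb4]; exact i.isLt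
    rw [fg_deg_p hn heven (by simpa using hb1) (by simpa using hb2) h0 (by simpa using hb7'),
      nbp hn heven (by simpa using hb1) (by simpa using hb2) h0 (by simpa using hb7'),
      Finset.sum_pair (by simp only [ne_eq, Fin.ext_iff]; simp only [hb4]; omega)] at hrp
    have hppi : (⟨ptn (ptn i.val), hb7'⟩ : Fin n) = i := by
      simp only [Fin.ext_iff, hb4]
    rw [hppi] at hrp
    -- hri : 2 * v i + (v z + v p) = q * v i ; hrp : 2 * v p + (v z + v i) = q * v p
    have hsub : (q - 1) * (v i - v ⟨ptn i.val, hb7⟩) = 0 := by push_cast at hri hrp; linarith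
    have heq2 : v i = v ⟨ptn i.val, hb7⟩ := by
      rcases mul_eq_zero.mp hsub with h | h
      · exact absurd h hq1
      · linarith
    push_cast at hri
    rw [← heq2] at hri
    linarith
  -- if v z = 0 then v = 0
  have hvz : v ⟨0, h0⟩ ≠ 0 := by
    intro hz
    apply hv
    funext j
    by_cases hj0 : j.val = 0
    · have : j = ⟨0, h0⟩ := Fin.ext hj0
      rw [this, hz]; rfl
    · by_cases hje : j.val = n - 1
      · have : j = ⟨n - 1, he⟩ := Fin.ext hje
        subst this
        push_cast at hrowe
        rw [hz] at hrowe
        have : (q - 1) * v ⟨n - 1, he⟩ = 0 := by linarith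
        rcases mul_eq_zero.mp this with h | h
        · exact absurd h hq1
        · rw [h]; rfl
      · have h1 : 1 ≤ j.val := by omega
        have h2 : j.val ≤ n - 2 := by have := j.isLt; omega
        have := hpair j h1 h2
        rw [hz] at this
        rcases mul_eq_zero.mp this with h | h
        · exact absurd h hq3'
        · rw [h]; rfl
  -- row zero
  have hrowz := hrow ⟨0, h0⟩
  rw [fg_deg_z, nbz, sum_erase_z hn h0 he v (v ⟨0, h0⟩ / (q - 3))
    (fun j hj1 hj2 => by
      rw [eq_div_iff hq3', mul_comm]
      exact hpair j (by omega) (by have := j.isLt; omega))] at hrowz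
  push_cast [Nat.cast_sub (by omega : 1 ≤ n)] at hrowz
  have hve : (q - 1) * v ⟨n - 1, he⟩ = v ⟨0, h0⟩ := by push_cast at hrowe; linarith
  have hve' : v ⟨n - 1, he⟩ = v ⟨0, h0⟩ / (q - 1) := by
    rw [eq_div_iff hq1, mul_comm]; exact hve
  rw [hve'] at hrowz
  have key : v ⟨0, h0⟩ * (q ^ 3 - ((n : ℝ) + 3) * q ^ 2 + 3 * (n : ℝ) * q - 2 * (n : ℝ) + 4) = 0 := by
    field_simp at hrowz
    linear_combination -(v ⟨0, h0⟩) * hrowz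
  rcases mul_eq_zero.mp key with h | h
  · exact absurd h hvz
  · exact h

end

end Stmt3Aux

/-- For even `n ≥ 4`, `q(F_n)` is the largest real root of
`x³ - (n+3)x² + 3nx - 2n + 4 = 0`. -/
theorem stmt_3 (n : ℕ) (hn : 4 ≤ n) (heven : Even n) :
    (qIndex (friendshipGraph n)) ^ 3 - ((n : ℝ) + 3) * (qIndex (friendshipGraph n)) ^ 2
        + 3 * (n : ℝ) * qIndex (friendshipGraph n) - 2 * (n : ℝ) + 4 = 0 ∧
      ∀ x : ℝ, x ^ 3 - ((n : ℝ) + 3) * x ^ 2 + 3 * (n : ℝ) * x - 2 * (n : ℝ) + 4 = 0 →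
        x ≤ qIndex (friendshipGraph n) := by
  classical
  have hn4 : (4 : ℝ) ≤ (n : ℝ) := by exact_mod_cast hn
  set f : ℝ → ℝ := fun x => x ^ 3 - ((n : ℝ) + 3) * x ^ 2 + 3 * (n : ℝ) * x - 2 * (n : ℝ) + 4 with hf
  have hfin := Matrix.finite_spectrum (signlessLaplacian (friendshipGraph n))
  have hbdd : BddAbove (spectrum ℝ (signlessLaplacian (friendshipGraph n))) := hfin.bddAbove
  -- existence of a root > 3
  have hcont : ContinuousOn f (Set.Icc 3 ((n : ℝ) + 3)) := by
    apply Continuous.continuousOn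
    fun_prop
  have himage := intermediate_value_Icc (by linarith : (3 : ℝ) ≤ (n : ℝ) + 3) hcont
  have hf3 : f 3 = 4 - 2 * (n : ℝ) := by simp only [hf]; ring
  have hfb : f ((n : ℝ) + 3) = 3 * (n : ℝ) ^ 2 + 7 * (n : ℝ) + 4 := by simp only [hf]; ring
  have h0mem : (0 : ℝ) ∈ Set.Icc (f 3) (f ((n : ℝ) + 3)) := by
    rw [hf3, hfb]
    constructor <;> nlinarith
  obtain ⟨r, hrIcc, hr0⟩ := himage h0mem
  have hr3 : 3 < r := by
    rcases lt_or_eq_of_le hrIcc.1 with h | h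
    · exact h
    · exfalso; rw [← h, hf3] at hr0; linarith
  have hrspec := Stmt3Aux.root_in_spectrum hn heven r (by rw [hf] at hr0; exact hr0)
  have hqmem : qIndex (friendshipGraph n) ∈ spectrum ℝ (signlessLaplacian (friendshipGraph n)) :=
    Set.Nonempty.csSup_mem ⟨r, hrspec⟩ hfin
  have hqr : r ≤ qIndex (friendshipGraph n) := le_csSup hbdd hrspec
  constructor
  · exact Stmt3Aux.top_satisfies hn heven _ (lt_of_lt_of_le hr3 hqr) hqmem
  · intro x hx
    exact le_csSup hbdd (Stmt3Aux.root_in_spectrum hn heven x hx)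
end

section
/- If n ≥ 4 is even, then n + 2/n < q(F_n) < n + 2/(n-1). -/
open SimpleGraph

lemma FG.spec_iff {n : ℕ} (M : Matrix (Fin n) (Fin n) ℝ) (μ : ℝ) :
    μ ∈ spectrum ℝ M ↔ ∃ x, x ≠ 0 ∧ M.mulVec x = μ • x := by
  rw [spectrum.mem_iff, Matrix.isUnit_iff_isUnit_det, isUnit_iff_ne_zero, not_not,
    ← Matrix.exists_mulVec_eq_zero_iff]
  have h2 : (algebraMap ℝ (Matrix (Fin n) (Fin n) ℝ)) μ = μ • (1 : Matrix (Fin n) (Fin n) ℝ) := by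
    simp [Algebra.algebraMap_eq_smul_one]
  constructor
  · rintro ⟨v, hv, h⟩
    rw [Matrix.sub_mulVec, h2, Matrix.smul_mulVec, Matrix.one_mulVec] at h
    exact ⟨v, hv, (sub_eq_zero.mp h).symm⟩
  · rintro ⟨v, hv, h⟩
    refine ⟨v, hv, ?_⟩
    rw [Matrix.sub_mulVec, h2, Matrix.smul_mulVec, Matrix.one_mulVec, h, sub_self]

namespace FG

section
variable {n : ℕ} (hn : 4 ≤ n) (hev : Even n) [DecidableRel (friendshipGraph n).Adj]

omit [DecidableRel (friendshipGraph n).Adj] in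
lemma adj_iff (i j : Fin n) :
    (friendshipGraph n).Adj i j ↔ i ≠ j ∧ (i.val = 0 ∨ j.val = 0 ∨ (i.val + 1) / 2 = (j.val + 1) / 2) :=
  Iff.rfl

include hn in
lemma nbr_z : (friendshipGraph n).neighborFinset ⟨0, by omega⟩ = Finset.univ.erase ⟨0, by omega⟩ := by
  ext u
  rw [mem_neighborFinset, Finset.mem_erase]
  simp only [Finset.mem_univ, and_true]
  exact ⟨fun h => h.1.symm, fun h => ⟨h.symm, Or.inl rfl⟩⟩

include hn hev in
lemma nbr_L : (friendshipGraph n).neighborFinset ⟨n-1, by omega⟩ = {⟨0, by omega⟩} := by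
  obtain ⟨m, hm⟩ := hev
  ext u
  have hu := u.isLt
  simp only [mem_neighborFinset, adj_iff, Finset.mem_singleton, Fin.ext_iff, Ne]
  omega

include hn hev in
lemma nbr_mid (v : Fin n) (h0 : v.val ≠ 0) (hL : v.val ≠ n - 1) :
    ∃ w : Fin n, w.val ≠ 0 ∧ w.val ≠ n - 1 ∧ w ≠ v ∧
      (friendshipGraph n).neighborFinset v = {⟨0, by omega⟩, w} := by
  obtain ⟨m, hm⟩ := hev
  have hv := v.isLt
  by_cases hpar : v.val % 2 = 1
  case pos =>
    refine ⟨⟨v.val + 1, by omega⟩, by simp, by simp; omega, by simp [Fin.ext_iff], ?_⟩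
    ext u
    have hu := u.isLt
    simp only [mem_neighborFinset, adj_iff, Finset.mem_insert, Finset.mem_singleton,
      Fin.ext_iff, Ne]
    omega
  case neg =>
    refine ⟨⟨v.val - 1, by omega⟩, by simp; omega, by simp; omega, by simp [Fin.ext_iff]; omega, ?_⟩
    ext u
    have hu := u.isLt
    simp only [mem_neighborFinset, adj_iff, Finset.mem_insert, Finset.mem_singleton,
      Fin.ext_iff, Ne]
    omega

include hn in
lemma deg_z : (friendshipGraph n).degree ⟨0, by omega⟩ = n - 1 := by
  rw [← card_neighborFinset_eq_degree, nbr_z hn, Finset.card_erase_of_mem (Finset.mem_univ _),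
    Finset.card_univ, Fintype.card_fin]

include hn hev in
lemma deg_L : (friendshipGraph n).degree ⟨n-1, by omega⟩ = 1 := by
  rw [← card_neighborFinset_eq_degree, nbr_L hn hev, Finset.card_singleton]

end

end FG

namespace FG
section
variable {n : ℕ} (hn : 4 ≤ n) (hev : Even n)

include hn in
lemma card_midset :
    ((Finset.univ.erase (⟨0, by omega⟩ : Fin n)).erase ⟨n-1, by omega⟩).card = n - 2 := by
  rw [Finset.card_erase_of_mem (Finset.mem_erase.mpr ⟨by simp [Fin.ext_iff]; omega, Finset.mem_univ _⟩),
    Finset.card_erase_of_mem (Finset.mem_univ _), Finset.card_univ, Fintype.card_fin]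
  omega

include hn hev in
lemma g_of_spec (μ : ℝ) (h1 : μ ≠ 1) (h3 : μ ≠ 3)
    (hsp : μ ∈ spectrum ℝ (signlessLaplacian (friendshipGraph n))) :
    (μ - ((n:ℝ)-1))*(μ-1)*(μ-3) - (μ-3) - ((n:ℝ)-2)*(μ-1) = 0 := by
  letI : DecidableRel (friendshipGraph n).Adj := Classical.decRel _
  have hQ : signlessLaplacian (friendshipGraph n)
      = Matrix.diagonal (fun v => ((friendshipGraph n).degree v : ℝ))
        + (friendshipGraph n).adjMatrix ℝ := rfl
  obtain ⟨x, hx0, hxe⟩ := (FG.spec_iff _ μ).mp hsp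
  set z : Fin n := ⟨0, by omega⟩ with hz
  set L : Fin n := ⟨n-1, by omega⟩ with hL
  have hre : ∀ v : Fin n, ((friendshipGraph n).degree v : ℝ) * x v
      + ∑ u ∈ (friendshipGraph n).neighborFinset v, x u = μ * x v := by
    intro v
    have h := congrFun hxe v
    rw [hQ, Matrix.add_mulVec, Pi.add_apply, Matrix.mulVec_diagonal,
      adjMatrix_mulVec_apply] at h
    simpa using h
  have h1' : μ - 1 ≠ 0 := sub_ne_zero.mpr h1
  have h3' : μ - 3 ≠ 0 := sub_ne_zero.mpr h3
  -- mid vertices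
  have hmid : ∀ v : Fin n, v.val ≠ 0 → v.val ≠ n-1 → (μ - 3) * x v = x z := by
    intro v h0 hLv
    obtain ⟨w, hw0, hwL, hwv, hNv⟩ := nbr_mid hn hev v h0 hLv
    obtain ⟨w', hw'0, hw'L, hw'w, hNw⟩ := nbr_mid hn hev w hw0 hwL
    have hzw : z ≠ w := by simp [hz, Fin.ext_iff]; omega
    have hzw' : z ≠ w' := by simp [hz, Fin.ext_iff]; omega
    have hw'v : w' = v := by
      have hadj : (friendshipGraph n).Adj v w := by
        have hw : w ∈ (friendshipGraph n).neighborFinset v := by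
          rw [hNv]; simp
        exact (mem_neighborFinset _ _ _).mp hw
      have hv : v ∈ (friendshipGraph n).neighborFinset w :=
        (mem_neighborFinset _ _ _).mpr hadj.symm
      rw [hNw] at hv
      rcases Finset.mem_insert.mp hv with h | h
      · exact absurd (congrArg Fin.val h) (by simpa [hz] using h0)
      · exact (Finset.mem_singleton.mp h).symm
    have hdv : (friendshipGraph n).degree v = 2 := by
      rw [← card_neighborFinset_eq_degree, hNv, Finset.card_insert_of_notMem (by simp [hwv, hzw]; exact hzw),
        Finset.card_singleton]
    have hdw : (friendshipGraph n).degree w = 2 := by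
      rw [← card_neighborFinset_eq_degree, hNw, Finset.card_insert_of_notMem (by simp [hzw']; exact hzw'),
        Finset.card_singleton]
    have hzv : z ≠ v := by simp [hz, Fin.ext_iff]; omega
    have hrv := hre v
    have hrw := hre w
    rw [hNv, hdv, Finset.sum_pair hzw] at hrv
    rw [hNw, hdw, hw'v] at hrw
    rw [Finset.sum_pair hzv] at hrw
    push_cast at hrv hrw
    have hvw : x v = x w := by
      have hfac : (μ - 1) * (x v - x w) = 0 := by linear_combination hrw - hrv
      rcases mul_eq_zero.mp hfac with h | h
      · exact absurd h h1'
      · linarith [sub_eq_zero.mp h]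
    rw [← hvw] at hrv
    linear_combination -hrv
  -- pendant
  have hpend : (μ - 1) * x L = x z := by
    have hr := hre L
    rw [nbr_L hn hev, deg_L hn hev, Finset.sum_singleton] at hr
    push_cast at hr
    linear_combination -hr
  -- x z ≠ 0
  have hxz : x z ≠ 0 := by
    intro hz0
    apply hx0
    funext u
    by_cases hu0 : u.val = 0
    · have : u = z := by simp [hz, Fin.ext_iff, hu0]
      rw [this, hz0]; rfl
    by_cases huL : u.val = n-1
    · have : u = L := by simp [hL, Fin.ext_iff, huL]
      rw [this]
      have := hpend
      rw [hz0] at this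
      have := mul_eq_zero.mp this
      simp only [Pi.zero_apply]
      tauto
    · have := hmid u hu0 huL
      rw [hz0] at this
      have := mul_eq_zero.mp this
      simp only [Pi.zero_apply]
      tauto
  -- z row
  have hrz := hre z
  rw [nbr_z hn, deg_z hn] at hrz
  have hLmem : L ∈ Finset.univ.erase z := by
    refine Finset.mem_erase.mpr ⟨?_, Finset.mem_univ _⟩
    simp [hz, hL, Fin.ext_iff]; omega
  rw [← Finset.add_sum_erase _ x hLmem] at hrz
  set S : Finset (Fin n) := (Finset.univ.erase z).erase L with hSdef
  have hScard : S.card = n - 2 := card_midset hn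
  have hSsum : (μ - 3) * (∑ u ∈ S, x u) = ((n:ℝ) - 2) * x z := by
    rw [Finset.mul_sum]
    have : ∀ u ∈ S, (μ - 3) * x u = x z := by
      intro u hu
      have h' := Finset.mem_erase.mp hu
      have huL := h'.1
      have huz := (Finset.mem_erase.mp h'.2).1
      refine hmid u ?_ ?_
      · simpa [hz, Fin.ext_iff] using huz
      · simpa [hL, Fin.ext_iff] using huL
    rw [Finset.sum_congr rfl this, Finset.sum_const, hScard, nsmul_eq_mul]
    congr 1
    push_cast [Nat.cast_sub (by omega : 2 ≤ n)]
    ring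
  have hcast : ((n - 1 : ℕ) : ℝ) = (n:ℝ) - 1 := by
    push_cast [Nat.cast_sub (by omega : 1 ≤ n)]
    ring
  rw [hcast] at hrz
  have key : ((μ - ((n:ℝ)-1))*(μ-1)*(μ-3) - (μ-3) - ((n:ℝ)-2)*(μ-1)) * x z = 0 := by
    linear_combination (-(μ-1)*(μ-3)) * hrz + (μ-3) * hpend + (μ-1) * hSsum
  exact (mul_eq_zero.mp key).resolve_right hxz

include hn hev in
lemma spec_of_g (μ : ℝ) (h1 : μ ≠ 1)
    (hg : (μ - ((n:ℝ)-1))*(μ-1)*(μ-3) - (μ-3) - ((n:ℝ)-2)*(μ-1) = 0) :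
    μ ∈ spectrum ℝ (signlessLaplacian (friendshipGraph n)) := by
  letI : DecidableRel (friendshipGraph n).Adj := Classical.decRel _
  have hQ : signlessLaplacian (friendshipGraph n)
      = Matrix.diagonal (fun v => ((friendshipGraph n).degree v : ℝ))
        + (friendshipGraph n).adjMatrix ℝ := rfl
  set z : Fin n := ⟨0, by omega⟩ with hz
  set L : Fin n := ⟨n-1, by omega⟩ with hL
  set x : Fin n → ℝ := fun u =>
    if u.val = 0 then (μ-3)*(μ-1) else if u.val = n-1 then (μ-3) else (μ-1) with hxdef
  have hxz : x z = (μ-3)*(μ-1) := by simp [hxdef, hz]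
  have hxL : x L = μ-3 := by simp [hxdef, hL, show ¬(n-1 = 0) by omega]
  have hxmid : ∀ u : Fin n, u.val ≠ 0 → u.val ≠ n-1 → x u = μ-1 := by
    intro u a b; simp [hxdef, a, b]
  apply (FG.spec_iff _ μ).mpr
  refine ⟨x, ?_, ?_⟩
  · intro hC
    have h2 := congrFun hC ⟨1, by omega⟩
    rw [hxmid ⟨1, by omega⟩ (by simp) (by simp; omega)] at h2
    exact (sub_ne_zero.mpr h1) h2
  · funext v
    rw [hQ, Matrix.add_mulVec, Pi.add_apply, Matrix.mulVec_diagonal,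
      adjMatrix_mulVec_apply, Pi.smul_apply, smul_eq_mul]
    by_cases h0 : v.val = 0
    · have hvz : v = z := by simp [hz, Fin.ext_iff, h0]
      subst hvz
      have hLmem : L ∈ Finset.univ.erase z := by
        refine Finset.mem_erase.mpr ⟨?_, Finset.mem_univ _⟩
        simp [hz, hL, Fin.ext_iff]; omega
      rw [deg_z hn, nbr_z hn, ← Finset.add_sum_erase _ x hLmem]
      have hSsum : ∑ u ∈ (Finset.univ.erase z).erase L, x u = ((n:ℝ) - 2) * (μ-1) := by
        have hc : ∀ u ∈ (Finset.univ.erase z).erase L, x u = μ - 1 := by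
          intro u hu
          have h' := Finset.mem_erase.mp hu
          have huL := h'.1
          have huz := (Finset.mem_erase.mp h'.2).1
          refine hxmid u ?_ ?_
          · simpa [hz, Fin.ext_iff] using huz
          · simpa [hL, Fin.ext_iff] using huL
        rw [Finset.sum_congr rfl hc, Finset.sum_const, card_midset hn, nsmul_eq_mul]
        congr 1
        push_cast [Nat.cast_sub (by omega : 2 ≤ n)]
        ring
      rw [hSsum, hxz, hxL]
      have hcast : ((n - 1 : ℕ) : ℝ) = (n:ℝ) - 1 := by
        push_cast [Nat.cast_sub (by omega : 1 ≤ n)]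
        ring
      rw [hcast]
      linear_combination -hg
    · by_cases hLv : v.val = n-1
      · have hvL : v = L := by simp [hL, Fin.ext_iff, hLv]
        subst hvL
        rw [deg_L hn hev, nbr_L hn hev, Finset.sum_singleton]
        have : (⟨0, by omega⟩ : Fin n) = z := rfl
        rw [this, hxz, hxL]
        push_cast
        ring
      · obtain ⟨w, hw0, hwL, hwv, hNv⟩ := nbr_mid hn hev v h0 hLv
        have hzw : z ≠ w := by simp [hz, Fin.ext_iff]; omega
        have hdv : (friendshipGraph n).degree v = 2 := by
          rw [← card_neighborFinset_eq_degree, hNv,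
            Finset.card_insert_of_notMem (by simp [hzw]; exact hzw), Finset.card_singleton]
        have hzz : (⟨0, by omega⟩ : Fin n) = z := rfl
        rw [hdv, hNv, hzz, Finset.sum_pair hzw, hxz, hxmid v h0 hLv, hxmid w hw0 hwL]
        push_cast
        ring

end
end FG

namespace FG

lemma gs_neg (N : ℝ) (hN : 4 ≤ N) :
    ((N + 2/N) - (N-1)) * ((N + 2/N)-1) * ((N + 2/N)-3) - ((N + 2/N)-3)
      - (N-2)*((N + 2/N)-1) < 0 := by
  have hN0 : (0:ℝ) < N := by linarith
  set s : ℝ := N + 2/N with hs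
  have hsN : s * N = N * N + 2 := by
    rw [hs]; field_simp
  have key : ((s - (N-1)) * (s-1) * (s-3) - (s-3) - (N-2)*(s-1)) * N^3
      = -2*N^3 + 8*N^2 - 12*N + 8 := by
    linear_combination (s^2*N^2 - 3*s*N^2 + 2*s*N + 2*N^2 - 6*N + 4) * hsN
  nlinarith [pow_pos hN0 3, sq_nonneg N]

lemma gt_pos (N μ : ℝ) (hN : 4 ≤ N) (hμ : N + 2/(N-1) ≤ μ) :
    0 < (μ - (N-1)) * (μ-1) * (μ-3) - (μ-3) - (N-2)*(μ-1) := by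
  obtain ⟨M, hM⟩ : ∃ M : ℝ, M = N - 1 := ⟨N-1, rfl⟩
  have hN' : N = M + 1 := by rw [hM]; ring
  subst hN'
  have hM3 : (3:ℝ) ≤ M := by linarith
  have hM0 : (0:ℝ) < M := by linarith
  rw [show M + 1 - 1 = M by ring] at hμ ⊢
  obtain ⟨d, hd⟩ : ∃ d : ℝ, d = μ - (M + 1 + 2/M) := ⟨_, rfl⟩
  have hd0 : 0 ≤ d := by rw [hd]; linarith
  have hμM : μ * M = M*M + M + 2 + d*M := by
    have h2 : μ = M + 1 + 2/M + d := by rw [hd]; ring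
    rw [h2]; field_simp
  have key : ((μ - M) * (μ-1) * (μ-3) - (μ-3) - ((M+1)-2)*(μ-1)) * M^3
      = (4*M^2 - 4*M + 8) + d*(M^5 - M^4 + 6*M^3 - 4*M^2 + 12*M)
        + d^2*(2*M^4 - M^3 + 6*M^2) + d^3*M^3 := by
    linear_combination (μ^2*M^2 + μ*M^2*d - 3*μ*M^2 + 2*μ*M + M^3*d + M^2*d^2 - 2*M^2*d + 2*M^2 + 4*M*d - 4*M + 4) * hμM
  have h1 : 0 < 4*M^2 - 4*M + 8 := by nlinarith
  have h2 : 0 ≤ M^5 - M^4 + 6*M^3 - 4*M^2 + 12*M := by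
    nlinarith [pow_pos hM0 3, pow_pos hM0 4, pow_pos hM0 5]
  have h3 : 0 ≤ 2*M^4 - M^3 + 6*M^2 := by nlinarith [pow_pos hM0 3, pow_pos hM0 4]
  have pos : 0 < ((μ - M) * (μ-1) * (μ-3) - (μ-3) - ((M+1)-2)*(μ-1)) * M^3 := by
    rw [key]
    nlinarith [mul_nonneg hd0 h2, mul_nonneg (mul_nonneg hd0 hd0) h3,
      mul_nonneg (pow_nonneg hd0 3) (le_of_lt (pow_pos hM0 3))]
  nlinarith [pos, pow_pos hM0 3]

end FG

/-- For even `n ≥ 4`, `n + 2/n < q(F_n) < n + 2/(n-1)`. -/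
theorem stmt_4 (n : ℕ) (hn : 4 ≤ n) (heven : Even n) :
    (n : ℝ) + 2 / (n : ℝ) < qIndex (friendshipGraph n) ∧
      qIndex (friendshipGraph n) < (n : ℝ) + 2 / ((n : ℝ) - 1) := by
  have hN : (4:ℝ) ≤ (n:ℝ) := by exact_mod_cast hn
  set N : ℝ := (n:ℝ) with hNdef
  set gf : ℝ → ℝ := fun μ => (μ - (N-1)) * (μ-1) * (μ-3) - (μ-3) - (N-2)*(μ-1) with hgf
  set s : ℝ := N + 2/N with hs
  set t : ℝ := N + 2/(N-1) with ht
  have hN0 : (0:ℝ) < N := by linarith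
  have hN1 : (0:ℝ) < N - 1 := by linarith
  have hst : s < t := by
    rw [hs, ht]
    have : 2/N < 2/(N-1) := by
      rw [div_lt_div_iff₀ hN0 hN1]; linarith
    linarith
  have hs3 : 3 < s := by
    rw [hs]
    have : 0 < 2/N := by positivity
    linarith
  have ht3 : 3 < t := by linarith
  have hgs : gf s < 0 := FG.gs_neg N hN
  have hgt : ∀ μ, t ≤ μ → 0 < gf μ := fun μ h => FG.gt_pos N μ hN h
  -- IVT
  have hc : ContinuousOn gf (Set.Icc s t) := by
    apply Continuous.continuousOn; rw [hgf]; fun_prop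
  have hsub := intermediate_value_Ioo (le_of_lt hst) hc
  have h0mem : (0:ℝ) ∈ Set.Ioo (gf s) (gf t) := ⟨hgs, hgt t le_rfl⟩
  obtain ⟨μ0, hμ0mem, hμ0⟩ := hsub h0mem
  obtain ⟨hμ0s, hμ0t⟩ := hμ0mem
  have hμ03 : 3 < μ0 := lt_trans hs3 hμ0s
  have hsp0 : μ0 ∈ spectrum ℝ (signlessLaplacian (friendshipGraph n)) := by
    exact FG.spec_of_g hn heven μ0 (by linarith) hμ0
  -- finiteness of spectrum
  set P : Polynomial ℝ := (Polynomial.X - Polynomial.C (N-1)) * (Polynomial.X - Polynomial.C 1)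
      * (Polynomial.X - Polynomial.C 3) - (Polynomial.X - Polynomial.C 3)
      - Polynomial.C (N-2) * (Polynomial.X - Polynomial.C 1) with hP
  have hPev : ∀ μ : ℝ, P.eval μ = gf μ := by
    intro μ; rw [hP, hgf]; simp
  have hPne : P ≠ 0 := by
    intro h
    have h2 := hPev t
    rw [h] at h2
    simp at h2
    exact absurd h2.symm (ne_of_gt (hgt t le_rfl))
  have hspec_sub : spectrum ℝ (signlessLaplacian (friendshipGraph n))
      ⊆ ({1} : Set ℝ) ∪ {3} ∪ {μ | P.IsRoot μ} := by
    intro μ hμ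
    by_cases e1 : μ = 1
    · exact Or.inl (Or.inl e1)
    by_cases e3 : μ = 3
    · exact Or.inl (Or.inr e3)
    · refine Or.inr ?_
      have := FG.g_of_spec hn heven μ e1 e3 hμ
      show P.eval μ = 0
      rw [hPev]
      rw [hgf]
      exact this
  have hfin : (spectrum ℝ (signlessLaplacian (friendshipGraph n))).Finite :=
    Set.Finite.subset (((Set.finite_singleton 1).union (Set.finite_singleton 3)).union
      (P.finite_setOf_isRoot hPne)) hspec_sub
  have hbdd := hfin.bddAbove
  have hlow : μ0 ≤ qIndex (friendshipGraph n) := le_csSup hbdd hsp0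
  have hmem : qIndex (friendshipGraph n) ∈ spectrum ℝ (signlessLaplacian (friendshipGraph n)) :=
    Set.Nonempty.csSup_mem ⟨μ0, hsp0⟩ hfin
  constructor
  · calc (n:ℝ) + 2/(n:ℝ) = s := by rw [hs]
    _ < μ0 := hμ0s
    _ ≤ _ := hlow
  · set q : ℝ := qIndex (friendshipGraph n) with hq
    by_contra hcon
    have htq : t ≤ q := not_lt.mp hcon
    have hq3 : 3 < q := by linarith
    have hgq := FG.g_of_spec hn heven q (by linarith) (by linarith) hmem
    rw [← hNdef] at hgq
    have hpos : 0 < (q - (N-1)) * (q-1) * (q-3) - (q-3) - (N-2)*(q-1) := hgt q htq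
    linarith
end

section
/- If n ≥ 4, then q(S_{n,2}) > n + 2 - 4/(n+1). -/
open SimpleGraph

section Aux

lemma sGraph_neighborFinset_lt (n : ℕ) (i : Fin n)
    [Fintype ((sGraph n 2).neighborSet i)] (hi : i.val < 2) :
    (sGraph n 2).neighborFinset i = Finset.univ.erase i := by
  ext j
  simp only [SimpleGraph.mem_neighborFinset, Finset.mem_erase, Finset.mem_univ, and_true]
  constructor
  · rintro ⟨h, -⟩; exact h.symm
  · intro h; exact ⟨h.symm, Or.inl hi⟩

lemma sGraph_neighborFinset_ge (n : ℕ) (hn : 2 ≤ n) (i : Fin n)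
    [Fintype ((sGraph n 2).neighborSet i)] (hi : ¬ i.val < 2) :
    (sGraph n 2).neighborFinset i =
      ({⟨0, by omega⟩, ⟨1, by omega⟩} : Finset (Fin n)) := by
  ext j
  simp only [SimpleGraph.mem_neighborFinset, Finset.mem_insert, Finset.mem_singleton]
  show (i ≠ j ∧ (i.val < 2 ∨ j.val < 2)) ↔ _
  simp only [Ne, Fin.ext_iff, Fin.val_mk]
  omega

end Aux

/-- For `n ≥ 4`, `q(S_{n,2}) > n + 2 - 4/(n+1)`. -/
theorem stmt_7 (n : ℕ) (hn : 4 ≤ n) :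
    (n : ℝ) + 2 - 4 / ((n : ℝ) + 1) < qIndex (sGraph n 2) := by
  classical
  have hnR : (4:ℝ) ≤ n := by exact_mod_cast hn
  have hs : (0:ℝ) ≤ ((n:ℝ) + 2)^2 - 16 := by nlinarith
  set s : ℝ := Real.sqrt (((n:ℝ) + 2)^2 - 16) with hsdef
  have hsq : s ^ 2 = ((n:ℝ) + 2)^2 - 16 := Real.sq_sqrt hs
  have hs0 : 0 ≤ s := Real.sqrt_nonneg _
  set l : ℝ := (((n:ℝ) + 2) + s) / 2 with hldef
  have hleq : l ^ 2 = ((n:ℝ) + 2) * l - 4 := by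
    rw [hldef]; linear_combination hsq / 4
  -- the eigenvector
  set x : ℝ := (n:ℝ) - 2 with hxdef
  set y : ℝ := l - n with hydef
  set v : Fin n → ℝ := fun i => if i.val < 2 then x else y with hvdef
  have hz0 : (0:ℕ) < n := by omega
  have hz1 : (1:ℕ) < n := by omega
  have hvne : v ≠ 0 := by
    intro h
    have h0 := congrFun h ⟨0, hz0⟩
    simp only [hvdef, Pi.zero_apply] at h0
    rw [if_pos (by norm_num)] at h0
    rw [hxdef] at h0
    nlinarith
  -- sum of v over all vertices
  have hpairne : (⟨0, hz0⟩ : Fin n) ≠ ⟨1, hz1⟩ := by simp [Fin.ext_iff]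
  have hfilter : Finset.univ.filter (fun j : Fin n => j.val < 2)
      = ({⟨0, hz0⟩, ⟨1, hz1⟩} : Finset (Fin n)) := by
    ext j
    simp only [Finset.mem_filter, Finset.mem_univ, true_and, Finset.mem_insert,
      Finset.mem_singleton, Fin.ext_iff]
    omega
  have hcard2 : (Finset.univ.filter (fun j : Fin n => j.val < 2)).card = 2 := by
    rw [hfilter, Finset.card_insert_of_notMem (by simp [Fin.ext_iff]), Finset.card_singleton]
  have hcardnot : (Finset.univ.filter (fun j : Fin n => ¬ j.val < 2)).card = n - 2 := by
    have h := Finset.card_filter_add_card_filter_not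
      (s := (Finset.univ : Finset (Fin n))) (p := fun j : Fin n => j.val < 2)
    rw [hcard2, Finset.card_univ, Fintype.card_fin] at h
    omega
  have h2n : (2:ℕ) ≤ n := by omega
  have hsumall : ∑ j, v j = 2 * x + ((n:ℝ) - 2) * y := by
    rw [← Finset.sum_filter_add_sum_filter_not Finset.univ (fun j : Fin n => j.val < 2) v]
    have e1 : ∑ j ∈ Finset.univ.filter (fun j : Fin n => j.val < 2), v j = 2 * x := by
      have hval : ∀ j ∈ Finset.univ.filter (fun j : Fin n => j.val < 2), v j = x := by
        intro j hj
        simp only [Finset.mem_filter] at hj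
        simp [hvdef, hj.2]; intro h; have := hj.2; omega
      rw [Finset.sum_congr rfl hval, Finset.sum_const, hcard2, nsmul_eq_mul]
      norm_num
    have e2 : ∑ j ∈ Finset.univ.filter (fun j : Fin n => ¬ j.val < 2), v j
        = ((n:ℝ) - 2) * y := by
      have hval : ∀ j ∈ Finset.univ.filter (fun j : Fin n => ¬ j.val < 2), v j = y := by
        intro j hj
        simp only [Finset.mem_filter] at hj
        simp [hvdef, hj.2]; intro h; have := hj.2; omega
      rw [Finset.sum_congr rfl hval, Finset.sum_const, hcardnot, nsmul_eq_mul,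
        Nat.cast_sub h2n]
      norm_num
    rw [e1, e2]
  -- the eigen-equation
  have key : Matrix.mulVec (signlessLaplacian (sGraph n 2)) v = l • v := by
    funext i
    rw [signlessLaplacian]
    rw [Matrix.add_mulVec, Pi.add_apply, Matrix.mulVec_diagonal,
      SimpleGraph.adjMatrix_mulVec_apply, Pi.smul_apply, smul_eq_mul]
    by_cases hi : i.val < 2
    · have hdeg : (((sGraph n 2).degree i : ℕ) : ℝ) = (n:ℝ) - 1 := by
        rw [SimpleGraph.degree, sGraph_neighborFinset_lt n i hi,
          Finset.card_erase_of_mem (Finset.mem_univ i), Finset.card_univ, Fintype.card_fin,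
          Nat.cast_sub (by omega)]
        norm_num
      rw [sGraph_neighborFinset_lt n i hi, Finset.sum_erase_eq_sub (Finset.mem_univ i),
        hsumall, hdeg]
      have hvi : v i = x := by simp [hvdef, hi]; intro h; omega
      rw [hvi, hxdef, hydef]
      ring
    · have hdeg : (((sGraph n 2).degree i : ℕ) : ℝ) = 2 := by
        rw [SimpleGraph.degree, sGraph_neighborFinset_ge n h2n i hi,
          Finset.card_insert_of_notMem (by simp [Fin.ext_iff]), Finset.card_singleton]
        norm_num
      rw [sGraph_neighborFinset_ge n h2n i hi, Finset.sum_pair hpairne, hdeg]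
      have hvi : v i = y := by simp [hvdef, hi]; intro h; omega
      have hv0 : v ⟨0, hz0⟩ = x := by simp [hvdef]
      have hv1 : v ⟨1, hz1⟩ = x := by simp [hvdef]
      rw [hvi, hv0, hv1, hxdef, hydef]
      linear_combination -hleq
  -- l is in the spectrum
  have hmem : l ∈ spectrum ℝ (signlessLaplacian (sGraph n 2)) := by
    rw [spectrum.mem_iff]
    intro hu
    have hinj := Matrix.mulVec_injective_iff_isUnit.mpr hu
    apply hvne
    have h2 : Matrix.mulVec (algebraMap ℝ (Matrix (Fin n) (Fin n) ℝ) l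
          - signlessLaplacian (sGraph n 2)) v
        = Matrix.mulVec (algebraMap ℝ (Matrix (Fin n) (Fin n) ℝ) l
          - signlessLaplacian (sGraph n 2)) 0 := by
      rw [Matrix.mulVec_zero, Matrix.sub_mulVec, key, Matrix.algebraMap_eq_diagonal]
      funext i
      simp [Matrix.mulVec_diagonal]
    exact hinj h2
  have hbdd : BddAbove (spectrum ℝ (signlessLaplacian (sGraph n 2))) :=
    (Matrix.finite_spectrum _).bddAbove
  have hle : l ≤ qIndex (sGraph n 2) := le_csSup hbdd hmem
  -- the numeric bound
  have hn1 : (0:ℝ) < (n:ℝ) + 1 := by positivity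
  have h8 : 8 / ((n:ℝ) + 1) ≤ 2 := by
    rw [div_le_iff₀ hn1]; linarith
  have hblt : (n:ℝ) + 2 - 8 / ((n:ℝ) + 1) < s := by
    rw [hsdef, Real.lt_sqrt (by linarith)]
    have expand : ((n:ℝ) + 2 - 8 / ((n:ℝ) + 1))
        = (((n:ℝ) + 2) * ((n:ℝ) + 1) - 8) / ((n:ℝ) + 1) := by
      field_simp
    rw [expand, div_pow, div_lt_iff₀ (by positivity)]
    nlinarith
  have hfin : (n : ℝ) + 2 - 4 / ((n : ℝ) + 1) < l := by
    have h48 : 8 / ((n:ℝ) + 1) = 2 * (4 / ((n:ℝ) + 1)) := by ring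
    rw [hldef]
    linarith
  exact lt_of_lt_of_le hfin hle
end

section
/- Let G be a simple graph of order n ≥ 4 containing no cycle of length 4 as a subgraph. If the maximum degree of G is at most n - 2, then q(G) ≤ n + 1/(n-2). -/
open SimpleGraph

lemma sl_entry {n : ℕ} (G : SimpleGraph (Fin n)) [DecidableRel G.Adj] (u w : Fin n) :
    signlessLaplacian G u w
      = (if u = w then (G.degree u : ℝ) else 0) + (if G.Adj u w then 1 else 0) := by
  unfold signlessLaplacian
  rw [Matrix.add_apply, Matrix.diagonal_apply, SimpleGraph.adjMatrix_apply]
  congr!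

lemma sl_nonneg {n : ℕ} (G : SimpleGraph (Fin n)) [DecidableRel G.Adj] (u w : Fin n) :
    0 ≤ signlessLaplacian G u w := by
  rw [sl_entry]
  have : (0:ℝ) ≤ if u = w then (G.degree u : ℝ) else 0 := by positivity
  have : (0:ℝ) ≤ if G.Adj u w then (1:ℝ) else 0 := by positivity
  positivity

lemma sl_mulVec {n : ℕ} (G : SimpleGraph (Fin n)) [DecidableRel G.Adj] (u : Fin n)
    (y : Fin n → ℝ) :
    (signlessLaplacian G).mulVec y u
      = (G.degree u : ℝ) * y u + ∑ w ∈ G.neighborFinset u, y w := by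
  have h : ∀ w, signlessLaplacian G u w * y w
      = (if u = w then (G.degree u : ℝ) * y w else 0) + (if G.Adj u w then y w else 0) := by
    intro w
    rw [sl_entry]
    split_ifs <;> ring
  simp only [Matrix.mulVec, dotProduct, h, Finset.sum_add_distrib,
    Finset.sum_ite_eq, Finset.mem_univ, if_true]
  congr 1
  rw [neighborFinset_eq_filter, Finset.sum_filter]
lemma sum_deg_nbhd {n : ℕ} (G : SimpleGraph (Fin n)) [DecidableRel G.Adj]
    (hC4 : ¬ ContainsCopy (cycleGraph 4) G) (u : Fin n) :
    ∑ w ∈ G.neighborFinset u, G.degree w ≤ G.degree u + (n - 1) := by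
  have hdeg : ∀ w : Fin n, G.degree w = ∑ z : Fin n, if G.Adj w z then 1 else 0 := by
    intro w
    rw [← card_neighborFinset_eq_degree, neighborFinset_eq_filter, Finset.card_filter]
  calc ∑ w ∈ G.neighborFinset u, G.degree w
      = ∑ w ∈ G.neighborFinset u, ∑ z : Fin n, (if G.Adj w z then 1 else 0) := by
        exact Finset.sum_congr rfl fun w _ => hdeg w
    _ = ∑ z : Fin n, ∑ w ∈ G.neighborFinset u, (if G.Adj w z then 1 else 0) :=
        Finset.sum_comm
    _ = ∑ z : Fin n, ((G.neighborFinset u).filter (fun w => G.Adj w z)).card := by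
        exact Finset.sum_congr rfl fun z _ => (Finset.card_filter _ _).symm
    _ ≤ G.degree u + (n - 1) := by
        rw [← Finset.add_sum_erase _ _ (Finset.mem_univ u)]
        refine Nat.add_le_add ?_ ?_
        · exact le_trans (Finset.card_le_card (Finset.filter_subset _ _))
            (le_of_eq (G.card_neighborFinset_eq_degree u))
        · have h2 : ∀ z ∈ Finset.univ.erase u,
              ((G.neighborFinset u).filter (fun w => G.Adj w z)).card ≤ 1 := by
            intro z hz
            have hzu : z ≠ u := (Finset.mem_erase.mp hz).1
            rw [Finset.card_le_one]
            intro w1 hw1 w2 hw2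
            by_contra hne
            rw [Finset.mem_filter, SimpleGraph.mem_neighborFinset] at hw1 hw2
            obtain ⟨ha1, hb1⟩ := hw1
            obtain ⟨ha2, hb2⟩ := hw2
            refine hC4 ⟨⟨![u, w1, z, w2], ?_⟩, ?_⟩
            · have n1 : u ≠ w1 := G.ne_of_adj ha1
              have n2 : u ≠ w2 := G.ne_of_adj ha2
              have n3 : w1 ≠ z := G.ne_of_adj hb1
              have n4 : w2 ≠ z := G.ne_of_adj hb2
              intro a b hab
              fin_cases a <;> fin_cases b <;> simp_all
            · intro a b hab
              fin_cases a <;> fin_cases b <;> simp only [DFunLike.coe] <;>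
                first
                  | exact absurd hab (by decide)
                  | simpa using ha1
                  | simpa using ha1.symm
                  | simpa using ha2
                  | simpa using ha2.symm
                  | simpa using hb1
                  | simpa using hb1.symm
                  | simpa using hb2
                  | simpa using hb2.symm
          calc ∑ z ∈ Finset.univ.erase u,
                ((G.neighborFinset u).filter (fun w => G.Adj w z)).card
              ≤ ∑ _z ∈ Finset.univ.erase u, 1 := Finset.sum_le_sum h2
            _ = (Finset.univ.erase u).card := by simp
            _ = n - 1 := by
                rw [Finset.card_erase_of_mem (Finset.mem_univ u), Finset.card_univ,
                  Fintype.card_fin]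

/-- If `G` has order `n ≥ 4`, no `C₄` as a subgraph, and maximum degree at most
`n - 2`, then `q(G) ≤ n + 1/(n-2)`. -/
theorem stmt_9 (n : ℕ) (hn : 4 ≤ n) (G : SimpleGraph (Fin n)) [DecidableRel G.Adj]
    (hC4 : ¬ ContainsCopy (cycleGraph 4) G)
    (hΔ : ∀ v : Fin n, G.degree v ≤ n - 2) :
    qIndex G ≤ (n : ℝ) + 1 / ((n : ℝ) - 2) := by
  have hn4 : (4:ℝ) ≤ (n:ℝ) := by exact_mod_cast hn
  have hn2 : (0:ℝ) < (n:ℝ) - 2 := by linarith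
  have hB0 : (0:ℝ) ≤ (n : ℝ) + 1 / ((n : ℝ) - 2) := by positivity
  refine Real.sSup_le ?_ hB0
  intro lam hlam
  -- extract an eigenvector
  have hev : Module.End.HasEigenvalue (Matrix.toLinAlgEquiv' (signlessLaplacian G)) lam := by
    rw [Module.End.hasEigenvalue_iff_mem_spectrum, AlgEquiv.spectrum_eq]
    exact hlam
  obtain ⟨x, hx⟩ := hev.exists_hasEigenvector
  have hxeq : ∀ u, (signlessLaplacian G).mulVec x u = lam * x u := by
    intro u
    have h := hx.apply_eq_smul
    rw [Matrix.toLinAlgEquiv'_apply] at h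
    have := congrFun h u
    simpa using this
  have hx0 : x ≠ 0 := hx.right
  set d : Fin n → ℝ := fun u => (G.degree u : ℝ) with hd
  set c : Fin n → ℝ := fun u => max (d u) 1 with hcdef
  have hc : ∀ u, 0 < c u := fun u => lt_of_lt_of_le one_pos (le_max_right _ _)
  set s : Fin n → ℝ := fun u => |x u| / c u with hsdef
  have hne : (Finset.univ : Finset (Fin n)).Nonempty := ⟨⟨0, by omega⟩, Finset.mem_univ _⟩
  obtain ⟨u0, -, hmax⟩ := Finset.exists_max_image Finset.univ s hne
  have hs0 : 0 < s u0 := by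
    obtain ⟨w, hw⟩ : ∃ w, x w ≠ 0 := by
      by_contra h
      push_neg at h
      exact hx0 (funext h)
    have : 0 < s w := div_pos (abs_pos.mpr hw) (hc w)
    exact lt_of_lt_of_le this (hmax w (Finset.mem_univ w))
  -- pointwise bound at u0
  have key : |lam| * |x u0| ≤ d u0 * |x u0| + ∑ w ∈ G.neighborFinset u0, |x w| := by
    have h1 : |lam| * |x u0| = |(signlessLaplacian G).mulVec x u0| := by
      rw [hxeq u0, abs_mul]
    rw [h1]
    calc |(signlessLaplacian G).mulVec x u0|
        = |∑ w, signlessLaplacian G u0 w * x w| := by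
          simp [Matrix.mulVec, dotProduct]
      _ ≤ ∑ w, |signlessLaplacian G u0 w * x w| := Finset.abs_sum_le_sum_abs _ _
      _ = ∑ w, signlessLaplacian G u0 w * |x w| := by
          refine Finset.sum_congr rfl fun w _ => ?_
          rw [abs_mul, abs_of_nonneg (sl_nonneg G u0 w)]
      _ = d u0 * |x u0| + ∑ w ∈ G.neighborFinset u0, |x w| := by
          have := sl_mulVec G u0 (fun w => |x w|)
          simpa [Matrix.mulVec, dotProduct] using this
  -- bound the neighbor sum via the max of s
  have hnb : ∑ w ∈ G.neighborFinset u0, |x w| ≤ s u0 * ∑ w ∈ G.neighborFinset u0, d w := by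
    rw [Finset.mul_sum]
    refine Finset.sum_le_sum fun w hw => ?_
    have hadj : G.Adj u0 w := (SimpleGraph.mem_neighborFinset _ _ _).mp hw
    have hdw : (1:ℝ) ≤ d w := by
      have h0 : 0 < G.degree w := G.degree_pos_iff_exists_adj w |>.mpr ⟨u0, hadj.symm⟩
      have : (1:ℕ) ≤ G.degree w := h0
      show (1:ℝ) ≤ ((G.degree w : ℕ) : ℝ)
      exact_mod_cast this
    have hcw : c w = d w := max_eq_left hdw
    have hle : s w ≤ s u0 := hmax w (Finset.mem_univ w)
    have hxw : |x w| = s w * c w := by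
      exact (div_mul_cancel₀ (|x w|) (hc w).ne').symm
    rw [hxw]
    calc s w * c w ≤ s u0 * c w :=
          mul_le_mul_of_nonneg_right hle (le_of_lt (hc w))
      _ = s u0 * d w := by rw [hcw]
  -- divide by s u0
  have habs : |lam| * c u0 ≤ d u0 * c u0 + ∑ w ∈ G.neighborFinset u0, d w := by
    have hxu0 : |x u0| = s u0 * c u0 := by exact (div_mul_cancel₀ (|x u0|) (hc u0).ne').symm
    rw [hxu0] at key
    have h2 : s u0 * (|lam| * c u0) ≤ s u0 * (d u0 * c u0 + ∑ w ∈ G.neighborFinset u0, d w) := by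
      nlinarith [key, hnb]
    exact le_of_mul_le_mul_left h2 hs0
  -- combinatorial bounds
  have hsum1 : (∑ w ∈ G.neighborFinset u0, d w) ≤ d u0 + ((n:ℝ) - 1) := by
    have h := sum_deg_nbhd G hC4 u0
    have hcast : ((∑ w ∈ G.neighborFinset u0, G.degree w : ℕ) : ℝ)
        ≤ ((G.degree u0 + (n - 1) : ℕ) : ℝ) := by exact_mod_cast h
    push_cast [Nat.cast_sub (by omega : 1 ≤ n)] at hcast
    simpa [hd] using hcast
  have hsum2 : (∑ w ∈ G.neighborFinset u0, d w) ≤ d u0 * ((n:ℝ) - 2) := by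
    have h : ∀ w ∈ G.neighborFinset u0, d w ≤ (n:ℝ) - 2 := by
      intro w _
      have := hΔ w
      have : ((G.degree w : ℕ) : ℝ) ≤ ((n - 2 : ℕ) : ℝ) := by exact_mod_cast this
      rwa [Nat.cast_sub (by omega : 2 ≤ n)] at this
    calc ∑ w ∈ G.neighborFinset u0, d w ≤ ∑ _w ∈ G.neighborFinset u0, ((n:ℝ) - 2) :=
          Finset.sum_le_sum h
      _ = (G.degree u0 : ℝ) * ((n:ℝ) - 2) := by
          rw [Finset.sum_const, G.card_neighborFinset_eq_degree u0, nsmul_eq_mul]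
      _ = d u0 * ((n:ℝ) - 2) := rfl
  have hdu : d u0 ≤ (n:ℝ) - 2 := by
    have := hΔ u0
    have h2 : ((G.degree u0 : ℕ) : ℝ) ≤ ((n - 2 : ℕ) : ℝ) := by exact_mod_cast this
    rwa [Nat.cast_sub (by omega : 2 ≤ n)] at h2
  have hlam_abs : |lam| ≤ (n : ℝ) + 1 / ((n : ℝ) - 2) := by
    rcases Nat.lt_or_ge (G.degree u0) 2 with hk | hk
    · -- degree 0 or 1 : |lam| ≤ d u0 + (n-2) ≤ n - 1
      have hd1 : d u0 ≤ 1 := by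
        have h1 : G.degree u0 ≤ 1 := by omega
        show ((G.degree u0 : ℕ) : ℝ) ≤ 1
        exact_mod_cast h1
      have hd0 : 0 ≤ d u0 := by positivity
      have hcu : c u0 ≤ 1 := max_le hd1 le_rfl
      have hcu' : 1 ≤ c u0 := le_max_right _ _
      have hcu1 : c u0 = 1 := le_antisymm hcu hcu'
      rw [hcu1, mul_one, mul_one] at habs
      have : |lam| ≤ d u0 + d u0 * ((n:ℝ) - 2) := by linarith [hsum2]
      have h9 : |lam| ≤ 1 + ((n:ℝ) - 2) := by nlinarith
      have : (0:ℝ) < 1 / ((n:ℝ) - 2) := by positivity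
      linarith
    · -- degree ≥ 2
      have hk2 : (2:ℝ) ≤ d u0 := by
        show (2:ℝ) ≤ ((G.degree u0 : ℕ) : ℝ)
        exact_mod_cast hk
      have hcu : c u0 = d u0 := max_eq_left (by linarith)
      rw [hcu] at habs
      have hineq : |lam| * d u0 ≤ d u0 * d u0 + d u0 + ((n:ℝ) - 1) := by
        nlinarith [habs, hsum1]
      -- factorization: (n-2)*(B*d - (d^2+d+n-1)) = (n-2-d)*(d*(n-2)-(n-1)) ≥ 0
      have f1 : (0:ℝ) ≤ ((n:ℝ) - 2) - d u0 := by linarith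
      have f2 : (0:ℝ) ≤ d u0 * ((n:ℝ) - 2) - ((n:ℝ) - 1) := by nlinarith
      have hBd : d u0 * d u0 + d u0 + ((n:ℝ) - 1)
          ≤ ((n : ℝ) + 1 / ((n : ℝ) - 2)) * d u0 := by
        rw [← sub_nonneg]
        have key2 : ((n : ℝ) + 1 / ((n : ℝ) - 2)) * d u0
            - (d u0 * d u0 + d u0 + ((n:ℝ) - 1))
            = (((↑n - 2) - d u0) * (d u0 * (↑n - 2) - (↑n - 1))) / ((n:ℝ) - 2) := by
          field_simp
          ring
        rw [key2]
        exact div_nonneg (mul_nonneg f1 f2) (le_of_lt hn2)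
      have := le_trans hineq hBd
      have hd0 : (0:ℝ) < d u0 := by linarith
      exact le_of_mul_le_mul_right (by linarith) hd0
  exact le_trans (le_abs_self lam) hlam_abs
end

section
/- Let G be a simple graph of order n ≥ 4 containing no cycle of length 4 as a subgraph. If G has a vertex u adjacent to all other vertices, then the subgraph of G induced on V(G) \ {u} has maximum degree at most 1; consequently q(G) ≤ q(F_n). -/
open SimpleGraph

section Spectral

open Matrix

variable {V : Type*} [Fintype V] [DecidableEq V]

lemma herm_spectrum_eq_range {A : Matrix V V ℝ} (hA : A.IsHermitian) :
    spectrum ℝ A = Set.range hA.eigenvalues := by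
  ext μ
  constructor
  · intro hμ
    by_contra hr
    rw [spectrum.mem_iff] at hμ
    apply hμ
    have hne : ∀ i, μ - hA.eigenvalues i ≠ 0 := by
      intro i h
      exact hr ⟨i, by linarith [sub_eq_zero.mp h]⟩
    set U : Matrix V V ℝ := (hA.eigenvectorUnitary : Matrix V V ℝ) with hUdef
    have hU1 : U * star U = 1 := mem_unitaryGroup_iff.mp hA.eigenvectorUnitary.2
    have hU2 : star U * U = 1 := mem_unitaryGroup_iff'.mp hA.eigenvectorUnitary.2
    have hst : A = U * diagonal hA.eigenvalues * star U := by
      have := hA.spectral_theorem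
      simpa using this
    have key : algebraMap ℝ (Matrix V V ℝ) μ - A
        = U * diagonal (fun i => μ - hA.eigenvalues i) * star U := by
      have h1 : (diagonal (fun i => μ - hA.eigenvalues i) : Matrix V V ℝ)
          = μ • (1 : Matrix V V ℝ) - diagonal hA.eigenvalues := by
        rw [smul_one_eq_diagonal, ← diagonal_sub]
      rw [h1, Algebra.algebraMap_eq_smul_one, mul_sub, sub_mul, ← hst]
      congr 1
      rw [Matrix.mul_smul, mul_one, Matrix.smul_mul, hU1]
    rw [key]
    have u1 : IsUnit U := ⟨⟨U, star U, hU1, hU2⟩, rfl⟩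
    have u2 : IsUnit (star U) := ⟨⟨star U, U, hU2, hU1⟩, rfl⟩
    have u3 : IsUnit (diagonal fun i => μ - hA.eigenvalues i) := by
      have e1 : diagonal (fun i => μ - hA.eigenvalues i) *
          diagonal (fun i => (μ - hA.eigenvalues i)⁻¹) = (1 : Matrix V V ℝ) := by
        rw [diagonal_mul_diagonal,
          show (fun i => (μ - hA.eigenvalues i) * (μ - hA.eigenvalues i)⁻¹) = fun _ => (1:ℝ)
            from funext fun i => mul_inv_cancel₀ (hne i), diagonal_one]
      have e2 : diagonal (fun i => (μ - hA.eigenvalues i)⁻¹) *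
          diagonal (fun i => μ - hA.eigenvalues i) = (1 : Matrix V V ℝ) := by
        rw [diagonal_mul_diagonal,
          show (fun i => (μ - hA.eigenvalues i)⁻¹ * (μ - hA.eigenvalues i)) = fun _ => (1:ℝ)
            from funext fun i => inv_mul_cancel₀ (hne i), diagonal_one]
      exact ⟨⟨_, _, e1, e2⟩, rfl⟩
    exact (u1.mul u3).mul u2
  · rintro ⟨i, rfl⟩
    exact hA.eigenvalues_mem_spectrum_real i

lemma herm_exists_greatest [Nonempty V] {A : Matrix V V ℝ} (hA : A.IsHermitian) :
    ∃ i₀ : V, IsGreatest (spectrum ℝ A) (hA.eigenvalues i₀) := by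
  obtain ⟨i₀, -, hmax⟩ := Finset.exists_max_image Finset.univ hA.eigenvalues ⟨Classical.arbitrary V, Finset.mem_univ _⟩
  refine ⟨i₀, ?_, ?_⟩
  · rw [herm_spectrum_eq_range hA]; exact ⟨i₀, rfl⟩
  · intro x hx
    rw [herm_spectrum_eq_range hA] at hx
    obtain ⟨i, rfl⟩ := hx
    exact hmax i (Finset.mem_univ i)

lemma herm_sSup_eq [Nonempty V] {A : Matrix V V ℝ} (hA : A.IsHermitian) :
    ∃ i₀ : V, sSup (spectrum ℝ A) = hA.eigenvalues i₀ ∧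
      ∀ i, hA.eigenvalues i ≤ hA.eigenvalues i₀ := by
  obtain ⟨i₀, hg⟩ := herm_exists_greatest hA
  exact ⟨i₀, hg.csSup_eq.symm ▸ hg.csSup_eq, fun i => hg.2 (by rw [herm_spectrum_eq_range hA]; exact ⟨i, rfl⟩)⟩

/-- Rayleigh quotient upper bound. -/
lemma rayleigh_le_sSup [Nonempty V] {A : Matrix V V ℝ} (hA : A.IsHermitian) (x : V → ℝ) :
    x ⬝ᵥ (A *ᵥ x) ≤ sSup (spectrum ℝ A) * (x ⬝ᵥ x) := by
  obtain ⟨i₀, hs, hmax⟩ := herm_sSup_eq hA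
  set U : Matrix V V ℝ := (hA.eigenvectorUnitary : Matrix V V ℝ) with hUdef
  have hU1 : U * star U = 1 := mem_unitaryGroup_iff.mp hA.eigenvectorUnitary.2
  have hst : A = U * diagonal hA.eigenvalues * star U := by
    have := hA.spectral_theorem
    simpa using this
  set y : V → ℝ := star U *ᵥ x with hy
  have hsame : x ᵥ* U = y := by
    funext i
    simp [hy, vecMul, mulVec, dotProduct, star_apply, mul_comm]
  have h1 : x ⬝ᵥ (A *ᵥ x) = y ⬝ᵥ (diagonal hA.eigenvalues *ᵥ y) :=
    calc x ⬝ᵥ (A *ᵥ x) = x ⬝ᵥ ((U * diagonal hA.eigenvalues * star U) *ᵥ x) := by rw [← hst]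
    _ = x ⬝ᵥ (U *ᵥ ((diagonal hA.eigenvalues * star U) *ᵥ x)) := by
        rw [mulVec_mulVec, Matrix.mul_assoc]
    _ = (x ᵥ* U) ⬝ᵥ ((diagonal hA.eigenvalues * star U) *ᵥ x) := by rw [dotProduct_mulVec]
    _ = y ⬝ᵥ (diagonal hA.eigenvalues *ᵥ (star U *ᵥ x)) := by rw [hsame, ← mulVec_mulVec]
    _ = y ⬝ᵥ (diagonal hA.eigenvalues *ᵥ y) := rfl
  have h2 : y ⬝ᵥ y = x ⬝ᵥ x :=
    calc y ⬝ᵥ y = (x ᵥ* U) ⬝ᵥ (star U *ᵥ x) := by rw [hsame]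
    _ = x ⬝ᵥ (U *ᵥ (star U *ᵥ x)) := (dotProduct_mulVec _ _ _).symm
    _ = x ⬝ᵥ ((U * star U) *ᵥ x) := by rw [mulVec_mulVec]
    _ = x ⬝ᵥ x := by rw [hU1, one_mulVec]
  have h3 : y ⬝ᵥ (diagonal hA.eigenvalues *ᵥ y) ≤ hA.eigenvalues i₀ * (y ⬝ᵥ y) := by
    simp only [dotProduct, mulVec_diagonal, Finset.mul_sum]
    refine Finset.sum_le_sum fun i _ => ?_
    have : hA.eigenvalues i * (y i * y i) ≤ hA.eigenvalues i₀ * (y i * y i) :=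
      mul_le_mul_of_nonneg_right (hmax i) (mul_self_nonneg _)
    nlinarith [this]
  rw [hs, h1, ← h2]
  exact h3

/-- The largest eigenvalue is attained by a unit eigenvector. -/
lemma exists_unit_attained [Nonempty V] {A : Matrix V V ℝ} (hA : A.IsHermitian) :
    ∃ x : V → ℝ, x ⬝ᵥ x = 1 ∧ x ⬝ᵥ (A *ᵥ x) = sSup (spectrum ℝ A) := by
  obtain ⟨i₀, hs, -⟩ := herm_sSup_eq hA
  have hvv : (⇑(hA.eigenvectorBasis i₀) : V → ℝ) ⬝ᵥ ⇑(hA.eigenvectorBasis i₀) = 1 := by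
    have hn := hA.eigenvectorBasis.orthonormal.1 i₀
    have : (inner ℝ (hA.eigenvectorBasis i₀) (hA.eigenvectorBasis i₀) : ℝ) = 1 := by
      rw [real_inner_self_eq_norm_mul_norm, hn, mul_one]
    rw [← this]
    simp only [PiLp.inner_apply, dotProduct, RCLike.inner_apply, conj_trivial, mul_comm]
  refine ⟨⇑(hA.eigenvectorBasis i₀), hvv, ?_⟩
  rw [hA.mulVec_eigenvectorBasis i₀, dotProduct_smul, smul_eq_mul, hvv, mul_one, hs]

lemma sSup_spectrum_mono [Nonempty V] {A B : Matrix V V ℝ} (hA : A.IsHermitian)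
    (hB : B.IsHermitian) (hA0 : ∀ i j, 0 ≤ A i j) (hAB : ∀ i j, A i j ≤ B i j) :
    sSup (spectrum ℝ A) ≤ sSup (spectrum ℝ B) := by
  obtain ⟨x, hx1, hx2⟩ := exists_unit_attained hA
  set w : V → ℝ := fun i => |x i| with hw
  have hww : w ⬝ᵥ w = 1 := by
    simpa [hw, dotProduct, abs_mul_abs_self] using hx1
  have step1 : x ⬝ᵥ (A *ᵥ x) ≤ w ⬝ᵥ (A *ᵥ w) := by
    simp only [dotProduct, mulVec, Finset.mul_sum]
    refine Finset.sum_le_sum fun i _ => Finset.sum_le_sum fun j _ => ?_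
    calc x i * (A i j * x j) ≤ |x i * (A i j * x j)| := le_abs_self _
    _ = w i * (A i j * w j) := by
        simp only [hw]
        rw [abs_mul, abs_mul, abs_of_nonneg (hA0 i j)]
        try ring
  have step2 : w ⬝ᵥ (A *ᵥ w) ≤ w ⬝ᵥ (B *ᵥ w) := by
    simp only [dotProduct, mulVec, Finset.mul_sum]
    refine Finset.sum_le_sum fun i _ => Finset.sum_le_sum fun j _ => ?_
    have h1 : (0:ℝ) ≤ w i := by rw [hw]; exact abs_nonneg _
    have h2 : (0:ℝ) ≤ w j := by rw [hw]; exact abs_nonneg _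
    have := hAB i j
    nlinarith [mul_le_mul_of_nonneg_right this (mul_nonneg h1 h2)]
  have step3 := rayleigh_le_sSup hB w
  rw [hww, mul_one] at step3
  linarith [hx2.symm.le]

lemma signlessLaplacian_isHermitian (G : SimpleGraph V) :
    (signlessLaplacian G).IsHermitian := by
  classical
  unfold signlessLaplacian
  refine Matrix.IsHermitian.add (isHermitian_diagonal _) ?_
  unfold Matrix.IsHermitian
  rw [conjTranspose_eq_transpose_of_trivial]
  exact G.isSymm_adjMatrix

lemma signlessLaplacian_nonneg (G : SimpleGraph V) (i j : V) :
    0 ≤ signlessLaplacian G i j := by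
  classical
  unfold signlessLaplacian
  simp only [Matrix.add_apply, Matrix.diagonal_apply, SimpleGraph.adjMatrix_apply]
  by_cases h : i = j <;> by_cases h2 : G.Adj i j <;> simp [h, h2] <;> positivity

lemma degree_le_degree {G H : SimpleGraph V} [DecidableRel G.Adj] [DecidableRel H.Adj]
    (h : G ≤ H) (v : V) : G.degree v ≤ H.degree v := by
  apply Finset.card_le_card
  intro w hw
  rw [SimpleGraph.mem_neighborFinset] at hw ⊢
  exact h hw

lemma signlessLaplacian_mono {G H : SimpleGraph V} (h : G ≤ H) (i j : V) :
    signlessLaplacian G i j ≤ signlessLaplacian H i j := by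
  classical
  unfold signlessLaplacian
  simp only [Matrix.add_apply, Matrix.diagonal_apply, SimpleGraph.adjMatrix_apply]
  by_cases hij : i = j
  · subst hij
    simp only [if_pos rfl, SimpleGraph.irrefl, if_false, add_zero]
    exact_mod_cast degree_le_degree h i
  · simp only [if_neg hij, zero_add]
    by_cases hGa : G.Adj i j
    · simp [hGa, h hGa]
    · by_cases hHa : H.Adj i j <;> simp [hGa, hHa]

lemma qIndex_mono [Nonempty V] {G H : SimpleGraph V} (h : G ≤ H) : qIndex G ≤ qIndex H :=
  sSup_spectrum_mono (signlessLaplacian_isHermitian G) (signlessLaplacian_isHermitian H)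
    (signlessLaplacian_nonneg G) (signlessLaplacian_mono h)

lemma signlessLaplacian_comap {W : Type*} [Fintype W] [DecidableEq W]
    (e : V ≃ W) (G : SimpleGraph W) :
    signlessLaplacian (G.comap ⇑e) = (signlessLaplacian G).submatrix e e := by
  classical
  have hdeg : ∀ v, (G.comap ⇑e).degree v = G.degree (e v) := by
    intro v
    unfold SimpleGraph.degree
    apply Finset.card_bij (fun w _ => e w)
    · intro a ha
      rw [SimpleGraph.mem_neighborFinset] at ha ⊢
      exact ha
    · intro a _ b _ hab
      exact e.injective hab
    · intro b hb
      rw [SimpleGraph.mem_neighborFinset] at hb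
      refine ⟨e.symm b, ?_, by simp⟩
      rw [SimpleGraph.mem_neighborFinset]
      show G.Adj (e v) (e (e.symm b))
      simpa using hb
  unfold signlessLaplacian
  ext i j
  simp only [Matrix.add_apply, Matrix.submatrix_apply, Matrix.diagonal_apply,
    SimpleGraph.adjMatrix_apply, SimpleGraph.comap_adj]
  erw [hdeg]
  congr 1
  by_cases hij : i = j
  · simp [hij]
  · rw [if_neg hij, if_neg (fun hc => hij (e.injective hc))]

lemma qIndex_comap {W : Type*} [Fintype W] [DecidableEq W] (e : V ≃ W) (G : SimpleGraph W) :
    qIndex (G.comap ⇑e) = qIndex G := by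
  unfold qIndex
  rw [signlessLaplacian_comap]
  congr 1
  have h1 : (signlessLaplacian G).submatrix ⇑e ⇑e
      = (Matrix.reindexAlgEquiv ℝ ℝ e.symm) (signlessLaplacian G) := by
    simp [Matrix.reindexAlgEquiv_apply, Matrix.reindex_apply]
  rw [h1, AlgEquiv.spectrum_eq]

end Spectral

/-- If `G` has order `n ≥ 4`, no `C₄` as a subgraph, and a vertex `u` adjacent to
all other vertices, then the subgraph induced on `V \ {u}` has maximum degree at
most `1` (no vertex outside `u` has two distinct neighbors outside `u`);
consequently `q(G) ≤ q(F_n)`. -/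
theorem stmt_10 (n : ℕ) (hn : 4 ≤ n) (G : SimpleGraph (Fin n))
    (hC4 : ¬ ContainsCopy (cycleGraph 4) G) (u : Fin n)
    (hu : ∀ v : Fin n, v ≠ u → G.Adj u v) :
    (∀ v w x : Fin n, v ≠ u → w ≠ u → x ≠ u → w ≠ x →
        G.Adj v w → G.Adj v x → False) ∧
      qIndex G ≤ qIndex (friendshipGraph n) := by
  classical
  haveI : Nonempty (Fin n) := ⟨⟨0, by omega⟩⟩
  have part1 : ∀ v w x : Fin n, v ≠ u → w ≠ u → x ≠ u → w ≠ x →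
      G.Adj v w → G.Adj v x → False := by
    intro v w x hv hw hx hwx hvw hvx
    apply hC4
    have d1 : u ≠ w := fun h => hw h.symm
    have d2 : u ≠ v := fun h => hv h.symm
    have d3 : u ≠ x := fun h => hx h.symm
    have d4 : w ≠ v := hvw.ne'
    have d5 : v ≠ x := hvx.ne
    refine ⟨⟨![u, w, v, x], ?_⟩, ?_⟩
    · intro a b hab
      fin_cases a <;> fin_cases b <;> simp_all
    · intro a b hab
      fin_cases a <;> fin_cases b <;>
        simp only [Matrix.cons_val', Matrix.cons_val_zero, Matrix.cons_val_one,
          Matrix.head_cons, Matrix.cons_val_fin_one, Matrix.cons_val_succ] at hab ⊢ <;>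
        first
          | exact absurd hab (by decide)
          | exact hu w hw
          | exact (hu w hw).symm
          | exact hvw.symm
          | exact hvw
          | exact hvx
          | exact hvx.symm
          | exact hu x hx
          | exact (hu x hx).symm
  refine ⟨part1, ?_⟩
  -- the matching on `V \ {u}`
  set m : Fin n → Fin n := fun v =>
    if h : v ≠ u ∧ ∃ w, w ≠ u ∧ G.Adj v w then h.2.choose else v with hm
  have hm_eq : ∀ v w, v ≠ u → w ≠ u → G.Adj v w → m v = w := by
    intro v w hv hw hadj
    have h : v ≠ u ∧ ∃ w, w ≠ u ∧ G.Adj v w := ⟨hv, w, hw, hadj⟩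
    have hmv : m v = h.2.choose := by simp only [hm]; exact dif_pos h
    have hspec := h.2.choose_spec
    by_contra hne
    exact part1 v h.2.choose w hv hspec.1 hw (fun hh => hne (hmv.trans hh)) hspec.2 hadj
  have hm_adj : ∀ v, m v ≠ v → v ≠ u ∧ m v ≠ u ∧ G.Adj v (m v) := by
    intro v hv
    by_cases h : v ≠ u ∧ ∃ w, w ≠ u ∧ G.Adj v w
    · have hmv : m v = h.2.choose := by simp only [hm]; exact dif_pos h
      have hspec := h.2.choose_spec
      rw [hmv]
      exact ⟨h.1, hspec.1, hspec.2⟩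
    · exact absurd (by simp only [hm]; exact dif_neg h) hv
  have hm_invol : ∀ v, m v ≠ v → m (m v) = v := by
    intro v hv
    obtain ⟨h1, h2, h3⟩ := hm_adj v hv
    exact hm_eq (m v) v h2 h1 h3.symm
  set S : Finset (Fin n) := Finset.univ.filter (fun v => m v ≠ v ∧ v < m v) with hSdef
  set T : Finset (Fin n) := Finset.univ.filter (fun v => m v ≠ v ∧ m v < v) with hTdef
  set R : Finset (Fin n) := Finset.univ.filter (fun v => v ≠ u ∧ m v = v) with hRdef
  have hmemS : ∀ v, v ∈ S ↔ (m v ≠ v ∧ v < m v) := by intro v; simp [hSdef]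
  have hmemT : ∀ v, v ∈ T ↔ (m v ≠ v ∧ m v < v) := by intro v; simp [hTdef]
  have hmemR : ∀ v, v ∈ R ↔ (v ≠ u ∧ m v = v) := by intro v; simp [hRdef]
  have hTS : ∀ v, v ∈ T → m v ∈ S := by
    intro v hv
    rw [hmemT] at hv
    rw [hmemS]
    have hinv := hm_invol v hv.1
    exact ⟨by rw [hinv]; exact fun hh => hv.1 hh.symm, by rw [hinv]; exact hv.2⟩
  have hST : ∀ v, v ∈ S → m v ∈ T := by
    intro v hv
    rw [hmemS] at hv
    rw [hmemT]
    have hinv := hm_invol v hv.1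
    exact ⟨by rw [hinv]; exact fun hh => hv.1 hh.symm, by rw [hinv]; exact hv.2⟩
  have hcardST : T.card = S.card := by
    apply Finset.card_bij (fun a _ => m a) hTS
    · intro a ha b hb hab
      rw [← hm_invol a ((hmemT a).mp ha).1, hab, hm_invol b ((hmemT b).mp hb).1]
    · intro b hb
      exact ⟨m b, hST b hb, hm_invol b ((hmemS b).mp hb).1⟩
  have hunion : S ∪ T ∪ R = Finset.univ.filter (fun v => v ≠ u) := by
    ext v
    simp only [Finset.mem_union, hmemS, hmemT, hmemR, Finset.mem_filter, Finset.mem_univ,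
      true_and]
    constructor
    · rintro ((⟨h1, _⟩ | ⟨h1, _⟩) | ⟨h1, _⟩)
      · exact (hm_adj v h1).1
      · exact (hm_adj v h1).1
      · exact h1
    · intro hv
      by_cases hmv : m v = v
      · exact Or.inr ⟨hv, hmv⟩
      · rcases lt_or_gt_of_ne (fun hh : v = m v => hmv hh.symm) with h | h
        · exact Or.inl (Or.inl ⟨hmv, h⟩)
        · exact Or.inl (Or.inr ⟨hmv, h⟩)
  have hdisjST : Disjoint S T := by
    rw [Finset.disjoint_left]
    intro a haS haT
    exact absurd (((hmemS a).mp haS).2.trans ((hmemT a).mp haT).2) (lt_irrefl _)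
  have hdisjR : Disjoint (S ∪ T) R := by
    rw [Finset.disjoint_left]
    intro a ha haR
    rcases Finset.mem_union.mp ha with h | h
    · exact ((hmemS a).mp h).1 ((hmemR a).mp haR).2
    · exact ((hmemT a).mp h).1 ((hmemR a).mp haR).2
  have hcard : 2 * S.card + R.card + 1 = n := by
    have h1 : (S ∪ T ∪ R).card = (S ∪ T).card + R.card :=
      Finset.card_union_of_disjoint hdisjR
    have h2 : (S ∪ T).card = S.card + T.card := Finset.card_union_of_disjoint hdisjST
    have h3 : (Finset.univ.filter (fun v : Fin n => v ≠ u)).card = n - 1 := by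
      rw [Finset.filter_ne', Finset.card_erase_of_mem (Finset.mem_univ u)]
      simp
    rw [hunion, h3, h2] at h1
    omega
  have hRmem : ∀ v, v ≠ u → v ∉ S → v ∉ T → v ∈ R := by
    intro v h1 h2 h3
    rw [hmemR]
    refine ⟨h1, ?_⟩
    by_contra hmv
    rcases lt_or_gt_of_ne (fun hh : v = m v => hmv hh.symm) with h | h
    · exact h2 ((hmemS v).mpr ⟨hmv, h⟩)
    · exact h3 ((hmemT v).mpr ⟨hmv, h⟩)
  have hSneu : ∀ v, v ∈ S → v ≠ u := fun v hv => (hm_adj v ((hmemS v).mp hv).1).1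
  have hTneu : ∀ v, v ∈ T → v ≠ u := fun v hv => (hm_adj v ((hmemT v).mp hv).1).1
  have hTnS : ∀ v, v ∈ T → v ∉ S := fun v hv hS =>
    absurd (((hmemS v).mp hS).2.trans ((hmemT v).mp hv).2) (lt_irrefl _)
  set f : Fin n → Fin n := fun v =>
    if hveq : v = u then ⟨0, by omega⟩
    else if hvS : v ∈ S then
      ⟨2 * (S.equivFin ⟨v, hvS⟩).val + 1, by
        have := (S.equivFin ⟨v, hvS⟩).isLt; omega⟩
    else if hvT : v ∈ T then
      ⟨2 * (S.equivFin ⟨m v, hTS v hvT⟩).val + 2, by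
        have := (S.equivFin ⟨m v, hTS v hvT⟩).isLt; omega⟩
    else
      ⟨2 * S.card + 1 + (R.equivFin ⟨v, hRmem v hveq hvS hvT⟩).val, by
        have := (R.equivFin ⟨v, hRmem v hveq hvS hvT⟩).isLt; omega⟩
    with hf
  have hf_u : (f u).val = 0 := by simp [hf]
  have hf_S : ∀ v (h : v ∈ S), (f v).val = 2 * (S.equivFin ⟨v, h⟩).val + 1 := by
    intro v h
    simp only [hf]
    rw [dif_neg (hSneu v h), dif_pos h]
  have hf_T : ∀ v (h : v ∈ T), (f v).val = 2 * (S.equivFin ⟨m v, hTS v h⟩).val + 2 := by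
    intro v h
    simp only [hf]
    rw [dif_neg (hTneu v h), dif_neg (hTnS v h), dif_pos h]
  have hf_R : ∀ v (h : v ∈ R), (f v).val = 2 * S.card + 1 + (R.equivFin ⟨v, h⟩).val := by
    intro v h
    have h1 : v ≠ u := ((hmemR v).mp h).1
    have h2 : v ∉ S := fun hS => ((hmemS v).mp hS).1 ((hmemR v).mp h).2
    have h3 : v ∉ T := fun hT => ((hmemT v).mp hT).1 ((hmemR v).mp h).2
    simp only [hf]
    rw [dif_neg h1, dif_neg h2, dif_neg h3]
  have htrich : ∀ v : Fin n, v = u ∨ v ∈ S ∨ v ∈ T ∨ v ∈ R := by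
    intro v
    by_cases h1 : v = u
    · exact Or.inl h1
    by_cases h2 : v ∈ S
    · exact Or.inr (Or.inl h2)
    by_cases h3 : v ∈ T
    · exact Or.inr (Or.inr (Or.inl h3))
    exact Or.inr (Or.inr (Or.inr (hRmem v h1 h2 h3)))
  have hinj : Function.Injective f := by
    intro a b hab
    have hval : (f a).val = (f b).val := congrArg Fin.val hab
    rcases htrich a with ha | ha | ha | ha <;> rcases htrich b with hb | hb | hb | hb
    · rw [ha, hb]
    · rw [ha, hf_u, hf_S b hb] at hval; omega
    · rw [ha, hf_u, hf_T b hb] at hval; omega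
    · rw [ha, hf_u, hf_R b hb] at hval; omega
    · rw [hb, hf_u, hf_S a ha] at hval; omega
    · rw [hf_S a ha, hf_S b hb] at hval
      have h1 : (S.equivFin ⟨a, ha⟩) = (S.equivFin ⟨b, hb⟩) := Fin.ext (by omega)
      exact Subtype.ext_iff.mp (S.equivFin.injective h1)
    · rw [hf_S a ha, hf_T b hb] at hval; omega
    · rw [hf_S a ha, hf_R b hb] at hval
      have h1 := (S.equivFin ⟨a, ha⟩).isLt
      omega
    · rw [hb, hf_u, hf_T a ha] at hval; omega
    · rw [hf_T a ha, hf_S b hb] at hval; omega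
    · rw [hf_T a ha, hf_T b hb] at hval
      have h1 : (S.equivFin ⟨m a, hTS a ha⟩) = (S.equivFin ⟨m b, hTS b hb⟩) :=
        Fin.ext (by omega)
      have h2 : m a = m b := Subtype.ext_iff.mp (S.equivFin.injective h1)
      rw [← hm_invol a ((hmemT a).mp ha).1, h2, hm_invol b ((hmemT b).mp hb).1]
    · rw [hf_T a ha, hf_R b hb] at hval
      have h1 := (S.equivFin ⟨m a, hTS a ha⟩).isLt
      omega
    · rw [hb, hf_u, hf_R a ha] at hval; omega
    · rw [hf_R a ha, hf_S b hb] at hval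
      have h1 := (S.equivFin ⟨b, hb⟩).isLt
      omega
    · rw [hf_R a ha, hf_T b hb] at hval
      have h1 := (S.equivFin ⟨m b, hTS b hb⟩).isLt
      omega
    · rw [hf_R a ha, hf_R b hb] at hval
      have h1 : (R.equivFin ⟨a, ha⟩) = (R.equivFin ⟨b, hb⟩) := Fin.ext (by omega)
      exact Subtype.ext_iff.mp (R.equivFin.injective h1)
  set E : Fin n ≃ Fin n := Equiv.ofBijective f (Finite.injective_iff_bijective.mp hinj)
    with hE
  have hEapp : ∀ v, E v = f v := fun v => rfl
  have hle : G ≤ (friendshipGraph n).comap ⇑E := by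
    intro a b hab
    show (friendshipGraph n).Adj (E a) (E b)
    refine ⟨fun hEab => hab.ne (E.injective hEab), ?_⟩
    by_cases ha : a = u
    · left; rw [hEapp, ha]; exact hf_u
    by_cases hb : b = u
    · right; left; rw [hEapp, hb]; exact hf_u
    right; right
    have hmab : m a = b := hm_eq a b ha hb hab
    have hmba : m b = a := hm_eq b a hb ha hab.symm
    rcases lt_or_gt_of_ne hab.ne with hlt | hgt
    · have haS : a ∈ S := (hmemS a).mpr
        ⟨by rw [hmab]; exact hab.ne', by rw [hmab]; exact hlt⟩
      have hbT : b ∈ T := (hmemT b).mpr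
        ⟨by rw [hmba]; exact hab.ne, by rw [hmba]; exact hlt⟩
      have h1 : (E a).val = 2 * (S.equivFin ⟨a, haS⟩).val + 1 := by
        rw [hEapp]; exact hf_S a haS
      have h2 : (E b).val = 2 * (S.equivFin ⟨a, haS⟩).val + 2 := by
        rw [hEapp]
        have h3 := hf_T b hbT
        rwa [show (⟨m b, hTS b hbT⟩ : {x // x ∈ S}) = ⟨a, haS⟩ from Subtype.ext hmba] at h3
      omega
    · have hbS : b ∈ S := (hmemS b).mpr
        ⟨by rw [hmba]; exact hab.ne, by rw [hmba]; exact hgt⟩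
      have haT : a ∈ T := (hmemT a).mpr
        ⟨by rw [hmab]; exact hab.ne', by rw [hmab]; exact hgt⟩
      have h1 : (E b).val = 2 * (S.equivFin ⟨b, hbS⟩).val + 1 := by
        rw [hEapp]; exact hf_S b hbS
      have h2 : (E a).val = 2 * (S.equivFin ⟨b, hbS⟩).val + 2 := by
        rw [hEapp]
        have h3 := hf_T a haT
        rwa [show (⟨m a, hTS a haT⟩ : {x // x ∈ S}) = ⟨b, hbS⟩ from Subtype.ext hmab] at h3
      omega
  calc qIndex G ≤ qIndex ((friendshipGraph n).comap ⇑E) := qIndex_mono hle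
  _ = qIndex (friendshipGraph n) := qIndex_comap E _
end

section
/- Let G be a simple graph of order n containing no cycle of length 4 as a subgraph, and let u be a vertex of G. Then the number of edges of G joining the neighborhood Γ(u) of u to the complement V(G) \ Γ(u) is at most n - 1. -/
open SimpleGraph

/-- If `G` has order `n` and no `C₄` as a subgraph, then for every vertex `u`,
`e(Γ(u), V \ Γ(u)) ≤ n - 1`. -/
theorem stmt_11 (n : ℕ) (G : SimpleGraph (Fin n)) [DecidableRel G.Adj]
    (hC4 : ¬ ContainsCopy (cycleGraph 4) G) (u : Fin n) :
    edgesBetween G (G.neighborFinset u) (G.neighborFinset u)ᶜ ≤ n - 1 := by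
  classical
  set X := G.neighborFinset u with hX
  have h1 : edgesBetween G X Xᶜ = ∑ w ∈ Xᶜ, (X.filter fun x => G.Adj x w).card := by
    unfold edgesBetween
    rw [Finset.card_filter, Finset.sum_product, Finset.sum_comm]
    refine Finset.sum_congr rfl fun w _ => ?_
    rw [Finset.card_filter]
    exact Finset.sum_congr rfl fun x _ => by congr
  rw [h1]
  have hu : u ∈ Xᶜ := by simp [hX]
  have key : ∀ w ∈ Xᶜ.erase u, (X.filter fun x => G.Adj x w).card ≤ 1 := by
    intro w hw
    have hwu : w ≠ u := (Finset.mem_erase.1 hw).1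
    have hwX : w ∉ X := Finset.mem_compl.1 (Finset.mem_erase.1 hw).2
    rw [Finset.card_le_one]
    intro a ha b hb
    by_contra hab
    simp only [Finset.mem_filter, hX, SimpleGraph.mem_neighborFinset] at ha hb
    obtain ⟨hua, haw⟩ := ha
    obtain ⟨hub, hbw⟩ := hb
    apply hC4
    refine ⟨⟨![u, a, w, b], ?_⟩, ?_⟩
    · intro i j hij
      have h1 : u ≠ a := hua.ne
      have h2 : u ≠ b := hub.ne
      have h3 : a ≠ w := haw.ne
      have h4 : b ≠ w := hbw.ne
      fin_cases i <;> fin_cases j <;> simp_all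
    · intro i j hij
      rw [cycleGraph_adj] at hij
      fin_cases i <;> fin_cases j <;> simp_all [Fin.ext_iff] <;>
        first
          | exact hua | exact hua.symm | exact haw | exact haw.symm
          | exact hub | exact hub.symm | exact hbw | exact hbw.symm
          | exact absurd hij (by decide)
  have hcu : (X.filter fun x => G.Adj x u).card = X.card := by
    congr 1
    apply Finset.filter_true_of_mem
    intro x hx
    exact ((SimpleGraph.mem_neighborFinset G u x).1 hx).symm
  rw [← Finset.insert_erase hu, Finset.sum_insert (Finset.notMem_erase u _), hcu]
  have h2 : ∑ w ∈ Xᶜ.erase u, (X.filter fun x => G.Adj x w).card ≤ (Xᶜ.erase u).card :=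
    Finset.sum_le_card_nsmul _ _ 1 key |>.trans (by simp)
  have hXc : Xᶜ.card = n - X.card := by
    rw [Finset.card_compl]
    simp
  have hXn : X.card ≤ n := (Finset.card_le_univ X).trans (by simp)
  have he : (Xᶜ.erase u).card = Xᶜ.card - 1 := Finset.card_erase_of_mem hu
  have hpos : 1 ≤ Xᶜ.card := Finset.card_pos.2 ⟨u, hu⟩
  omega
end

section
/- Let G be a simple graph containing no cycle of length 5 as a subgraph, let u be a vertex of G, and let x, y, z be three vertices in the neighborhood Γ(u) that form a triangle in G. Then every vertex w of G with w ∉ Γ(u) ∪ {u} is adjacent to at most one of the vertices x, y, z. -/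
open SimpleGraph

lemma c5_of_cycle {V : Type*} (G : SimpleGraph V) (a b c d e : V)
    (hab : G.Adj a b) (hbc : G.Adj b c) (hcd : G.Adj c d) (hde : G.Adj d e)
    (hea : G.Adj e a) (hac : a ≠ c) (hbd : b ≠ d) (hce : c ≠ e) (hda : d ≠ a)
    (heb : e ≠ b) :
    ContainsCopy (cycleGraph 5) G := by
  refine ⟨⟨![a,b,c,d,e], ?_⟩, ?_⟩
  · intro i j h
    fin_cases i <;> fin_cases j <;> simp_all
  · intro i j h
    rw [cycleGraph_adj] at h
    fin_cases i <;> fin_cases j <;> simp_all [Fin.ext_iff] <;>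
      first | exact hab.symm | exact hbc.symm | exact hcd.symm | exact hde.symm
            | exact hea.symm | exact hab | exact hbc | exact hcd | exact hde
            | exact hea | exact absurd h (by decide)

/-- If `G` contains no `C₅` as a subgraph and `x, y, z ∈ Γ(u)` form a triangle,
then every vertex `w ∉ Γ(u) ∪ {u}` is adjacent to at most one of `x, y, z`. -/
theorem stmt_13 {V : Type*} (G : SimpleGraph V)
    (hC5 : ¬ ContainsCopy (cycleGraph 5) G) (u x y z : V)
    (hux : G.Adj u x) (huy : G.Adj u y) (huz : G.Adj u z)
    (hxy : G.Adj x y) (hxz : G.Adj x z) (hyz : G.Adj y z)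
    (w : V) (hwu : w ≠ u) (hwN : ¬ G.Adj u w) :
    ¬ (G.Adj w x ∧ G.Adj w y) ∧ ¬ (G.Adj w x ∧ G.Adj w z) ∧
      ¬ (G.Adj w y ∧ G.Adj w z) := by
  have hwz : w = z → False := fun h => hwN (h ▸ huz)
  have hwy : w = y → False := fun h => hwN (h ▸ huy)
  have hwx : w = x → False := fun h => hwN (h ▸ hux)
  refine ⟨fun ⟨h1, h2⟩ => hC5 ?_, fun ⟨h1, h2⟩ => hC5 ?_, fun ⟨h1, h2⟩ => hC5 ?_⟩
  · exact c5_of_cycle G u x w y z hux h1.symm h2 hyz huz.symm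
      (Ne.symm hwu) hxy.ne hwz huy.ne' hxz.ne'
  · exact c5_of_cycle G u x w z y hux h1.symm h2 hyz.symm huy.symm
      (Ne.symm hwu) hxz.ne hwy huz.ne' hxy.ne'
  · exact c5_of_cycle G u y w z x huy h1.symm h2 hxz.symm hux.symm
      (Ne.symm hwu) hyz.ne hwx huz.ne' hxy.ne
end

section
/- Let G be a simple graph of order n ≥ 6 containing no cycle of length 5 as a subgraph. If the maximum degree of G is at most n - 2, then q(G) < q(S_{n,2}). -/
open SimpleGraph

open Finset

lemma signlessLaplacian_eq {V : Type*} [Fintype V] [DecidableEq V]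
    (G : SimpleGraph V) [DecidableRel G.Adj] :
    signlessLaplacian G
      = Matrix.diagonal (fun v => (G.degree v : ℝ)) + G.adjMatrix ℝ := by
  unfold signlessLaplacian
  have h : Classical.decRel G.Adj = ‹DecidableRel G.Adj› := Subsingleton.elim _ _
  rw [h]

lemma exists_eigvec {n : ℕ} (M : Matrix (Fin n) (Fin n) ℝ) {μ : ℝ}
    (hμ : μ ∈ spectrum ℝ M) : ∃ x : Fin n → ℝ, x ≠ 0 ∧ M.mulVec x = μ • x := by
  rw [spectrum.mem_iff] at hμ
  rw [Matrix.isUnit_iff_isUnit_det, isUnit_iff_ne_zero, not_not] at hμ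
  obtain ⟨v, hv0, hv⟩ := (Matrix.exists_mulVec_eq_zero_iff).mpr hμ
  refine ⟨v, hv0, ?_⟩
  rw [Matrix.sub_mulVec] at hv
  have h1 : (algebraMap ℝ (Matrix (Fin n) (Fin n) ℝ) μ).mulVec v = μ • v := by
    ext i; simp [Matrix.algebraMap_eq_diagonal, Matrix.mulVec_diagonal]
  rw [h1, sub_eq_zero] at hv
  exact hv.symm

lemma eig_bound {n : ℕ} (hn : 0 < n) (H : SimpleGraph (Fin n)) [DecidableRel H.Adj] {μ : ℝ}
    (hμ : μ ∈ spectrum ℝ (signlessLaplacian H)) :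
    ∃ u : Fin n, μ ≤ (H.degree u : ℝ) +
      (∑ w ∈ H.neighborFinset u, (H.degree w : ℝ)) / max (H.degree u : ℝ) 1 := by
  obtain ⟨x, hx0, hx⟩ := exists_eigvec _ hμ
  set s : Fin n → ℝ := fun v => max (H.degree v : ℝ) 1 with hs
  have hspos : ∀ v, 0 < s v := fun v => lt_max_of_lt_right one_pos
  obtain ⟨u, -, hu⟩ := Finset.exists_max_image (univ : Finset (Fin n))
    (fun v => |x v| / s v) ⟨⟨0, hn⟩, mem_univ _⟩
  refine ⟨u, ?_⟩
  have hxu : 0 < |x u| / s u := by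
    obtain ⟨v, hv⟩ := Function.ne_iff.mp hx0
    have h1 : 0 < |x v| / s v := div_pos (abs_pos.mpr hv) (hspos v)
    exact lt_of_lt_of_le h1 (hu v (mem_univ v))
  have hrow : μ * x u = (H.degree u : ℝ) * x u + ∑ w ∈ H.neighborFinset u, x w := by
    have := congrFun hx u
    rw [signlessLaplacian_eq] at this
    simpa [Matrix.add_mulVec, Matrix.mulVec_diagonal] using this.symm
  have key : |μ - (H.degree u : ℝ)| * |x u| ≤
      (∑ w ∈ H.neighborFinset u, (H.degree w : ℝ)) * (|x u| / s u) := by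
    have h2 : (μ - (H.degree u : ℝ)) * x u = ∑ w ∈ H.neighborFinset u, x w := by
      ring_nf; ring_nf at hrow; linarith [hrow]
    calc |μ - (H.degree u : ℝ)| * |x u| = |∑ w ∈ H.neighborFinset u, x w| := by
          rw [← abs_mul, h2]
      _ ≤ ∑ w ∈ H.neighborFinset u, |x w| := Finset.abs_sum_le_sum_abs _ _
      _ ≤ ∑ w ∈ H.neighborFinset u, (H.degree w : ℝ) * (|x u| / s u) := by
          refine Finset.sum_le_sum fun w hw => ?_
          have hdw : (1 : ℝ) ≤ (H.degree w : ℝ) := by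
            have : 0 < H.degree w := by
              rw [H.degree_pos_iff_exists_adj]
              exact ⟨u, (H.adj_symm ((H.mem_neighborFinset u w).mp hw))⟩
            exact_mod_cast this
          have hsw : s w = (H.degree w : ℝ) := max_eq_left hdw
          have := hu w (mem_univ w)
          calc |x w| = (|x w| / s w) * s w := by rw [div_mul_cancel₀ _ (hspos w).ne']
            _ ≤ (|x u| / s u) * s w :=
              mul_le_mul_of_nonneg_right this (le_of_lt (hspos w))
            _ = (H.degree w : ℝ) * (|x u| / s u) := by rw [hsw]; ring
      _ = (∑ w ∈ H.neighborFinset u, (H.degree w : ℝ)) * (|x u| / s u) := by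
          rw [Finset.sum_mul]
  -- divide by |x u|
  have hxu' : 0 < |x u| := by
    by_contra h
    push_neg at h
    have : |x u| = 0 := le_antisymm h (abs_nonneg _)
    rw [this] at hxu; simp at hxu
  have key2 : |μ - (H.degree u : ℝ)| ≤
      (∑ w ∈ H.neighborFinset u, (H.degree w : ℝ)) / s u := by
    rw [div_eq_mul_inv]
    have := key
    rw [div_eq_mul_inv, mul_comm |x u| (s u)⁻¹, ← mul_assoc] at this
    exact le_of_mul_le_mul_right this hxu'
  have h3 := (abs_le.mp key2).2
  have hsu : s u = max (H.degree u : ℝ) 1 := rfl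
  rw [hsu] at h3
  linarith

instance sDec (n k : ℕ) : DecidableRel (sGraph n k).Adj := fun i j =>
  decidable_of_iff (i ≠ j ∧ (i.val < k ∨ j.val < k)) Iff.rfl

lemma sGraph_adj {n k : ℕ} {i j : Fin n} :
    (sGraph n k).Adj i j ↔ i ≠ j ∧ ((i : ℕ) < k ∨ (j : ℕ) < k) := Iff.rfl

lemma sGraph_nbr_lt {n : ℕ} {i : Fin n} (hi : (i : ℕ) < 2) :
    (sGraph n 2).neighborFinset i = univ.erase i := by
  ext j
  simp only [mem_neighborFinset, sGraph_adj, mem_erase, mem_univ, and_true]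
  constructor
  · rintro ⟨h1, -⟩; exact h1.symm
  · intro h; exact ⟨h.symm, Or.inl hi⟩

lemma sGraph_nbr_ge {n : ℕ} (hn : 6 ≤ n) {i : Fin n} (hi : ¬ (i : ℕ) < 2) :
    (sGraph n 2).neighborFinset i
      = {(⟨0, by omega⟩ : Fin n), (⟨1, by omega⟩ : Fin n)} := by
  ext j
  simp only [mem_neighborFinset, sGraph_adj, mem_insert, mem_singleton]
  constructor
  · rintro ⟨h1, h2 | h2⟩
    · omega
    · have h3 : (j : ℕ) = 0 ∨ (j : ℕ) = 1 := by omega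
      rcases h3 with h | h
      · left; exact Fin.ext h
      · right; exact Fin.ext h
  · intro h
    have hj : (j : ℕ) < 2 := by rcases h with h | h <;> simp [h]
    refine ⟨fun he => hi (he ▸ hj), Or.inr hj⟩

lemma sGraph_degree_lt {n : ℕ} (hn : 6 ≤ n) {i : Fin n} (hi : (i : ℕ) < 2) :
    (sGraph n 2).degree i = n - 1 := by
  rw [SimpleGraph.degree, sGraph_nbr_lt hi, card_erase_of_mem (mem_univ i), card_univ,
    Fintype.card_fin]

lemma sGraph_degree_ge {n : ℕ} (hn : 6 ≤ n) {i : Fin n} (hi : ¬ (i : ℕ) < 2) :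
    (sGraph n 2).degree i = 2 := by
  rw [SimpleGraph.degree, sGraph_nbr_ge hn hi]
  rw [card_insert_of_notMem (by simp [Fin.ext_iff]), card_singleton]

lemma sGraph_eig {n : ℕ} (hn : 6 ≤ n) :
    ((n : ℝ) + 2 + Real.sqrt (((n : ℝ) + 2) ^ 2 - 16)) / 2
      ∈ spectrum ℝ (signlessLaplacian (sGraph n 2)) := by
  have hn' : (6 : ℝ) ≤ (n : ℝ) := by exact_mod_cast hn
  set s : ℝ := Real.sqrt (((n : ℝ) + 2) ^ 2 - 16) with hsdef
  set l : ℝ := ((n : ℝ) + 2 + s) / 2 with hldef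
  have hs2 : s ^ 2 = ((n : ℝ) + 2) ^ 2 - 16 := Real.sq_sqrt (by nlinarith)
  have hl2 : l ^ 2 = ((n : ℝ) + 2) * l - 4 := by
    rw [hldef]; ring_nf; nlinarith [hs2]
  set v : Fin n → ℝ := fun i => if (i : ℕ) < 2 then l - 2 else 2 with hvdef
  have hv0 : v ≠ 0 := by
    intro h
    have := congrFun h ⟨2, by omega⟩
    simp [hvdef] at this
  have hsum : ∑ j : Fin n, v j = 2 * (l - 2) + ((n : ℝ) - 2) * 2 := by
    rw [← Finset.sum_filter_add_sum_filter_not univ (fun j : Fin n => (j : ℕ) < 2)]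
    have hf : (univ.filter fun j : Fin n => (j : ℕ) < 2)
        = {(⟨0, by omega⟩ : Fin n), (⟨1, by omega⟩ : Fin n)} := by
      ext j; simp [Fin.ext_iff]; omega
    have hcard : (univ.filter fun j : Fin n => ¬ (j : ℕ) < 2).card = n - 2 := by
      have := card_filter_add_card_filter_not (s := (univ : Finset (Fin n)))
        (p := fun j : Fin n => (j : ℕ) < 2)
      rw [hf] at this
      simp only [card_univ, Fintype.card_fin] at this
      have h2 : ({(⟨0, by omega⟩ : Fin n), (⟨1, by omega⟩ : Fin n)} : Finset (Fin n)).card = 2 := by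
        rw [card_insert_of_notMem (by simp [Fin.ext_iff]), card_singleton]
      omega
    have h1 : ∑ j ∈ univ.filter (fun j : Fin n => (j : ℕ) < 2), v j = 2 * (l - 2) := by
      rw [hf]
      rw [Finset.sum_insert (by simp [Fin.ext_iff]), Finset.sum_singleton]
      simp [hvdef]; ring
    have h2 : ∑ j ∈ univ.filter (fun j : Fin n => ¬ (j : ℕ) < 2), v j = ((n : ℝ) - 2) * 2 := by
      have hc : ∀ j ∈ univ.filter (fun j : Fin n => ¬ (j : ℕ) < 2), v j = 2 := by
        intro j hj
        simp only [mem_filter] at hj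
        simp only [hvdef, hj.2, ↓reduceIte]
      rw [Finset.sum_congr rfl hc, Finset.sum_const, hcard, nsmul_eq_mul,
        Nat.cast_sub (by omega : 2 ≤ n)]
      norm_num
    rw [h1, h2]
  have hQv : (signlessLaplacian (sGraph n 2)).mulVec v = l • v := by
    rw [signlessLaplacian_eq]
    ext i
    rw [Matrix.add_mulVec]
    simp only [Pi.add_apply, Pi.smul_apply, Matrix.mulVec_diagonal,
      adjMatrix_mulVec_apply, smul_eq_mul]
    by_cases hi : (i : ℕ) < 2
    · rw [sGraph_nbr_lt hi, sGraph_degree_lt hn hi]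
      rw [Finset.sum_erase_eq_sub (mem_univ i), hsum]
      have hvi : v i = l - 2 := by simp only [hvdef, hi, ↓reduceIte]
      have hdc : ((n - 1 : ℕ) : ℝ) = (n : ℝ) - 1 := by
        rw [Nat.cast_sub (by omega)]; norm_num
      rw [hvi, hdc]
      nlinarith [hl2]
    · rw [sGraph_nbr_ge hn hi, sGraph_degree_ge hn hi]
      rw [Finset.sum_insert (by simp [Fin.ext_iff]), Finset.sum_singleton]
      have hvi : v i = 2 := by simp only [hvdef, hi, ↓reduceIte]
      have h0 : v (⟨0, by omega⟩ : Fin n) = l - 2 := by simp [hvdef]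
      have h1 : v (⟨1, by omega⟩ : Fin n) = l - 2 := by simp [hvdef]
      rw [hvi, h0, h1]
      ring
  rw [spectrum.mem_iff]
  intro hun
  rw [Matrix.isUnit_iff_isUnit_det, isUnit_iff_ne_zero] at hun
  apply hun
  rw [← Matrix.exists_mulVec_eq_zero_iff]
  refine ⟨v, hv0, ?_⟩
  rw [Matrix.sub_mulVec, hQv]
  have h1 : (algebraMap ℝ (Matrix (Fin n) (Fin n) ℝ) l).mulVec v = l • v := by
    ext i; simp [Matrix.algebraMap_eq_diagonal, Matrix.mulVec_diagonal]
  rw [h1, sub_self]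

lemma containsC5 {n : ℕ} (G : SimpleGraph (Fin n)) (v0 v1 v2 v3 v4 : Fin n)
    (h01 : G.Adj v0 v1) (h12 : G.Adj v1 v2) (h23 : G.Adj v2 v3)
    (h34 : G.Adj v3 v4) (h40 : G.Adj v4 v0)
    (d02 : v0 ≠ v2) (d03 : v0 ≠ v3) (d13 : v1 ≠ v3) (d14 : v1 ≠ v4) (d24 : v2 ≠ v4) :
    ContainsCopy (cycleGraph 5) G := by
  have d01 := h01.ne
  have d12 := h12.ne
  have d23 := h23.ne
  have d34 := h34.ne
  have d40 := h40.ne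
  refine ⟨⟨![v0, v1, v2, v3, v4], ?_⟩, ?_⟩
  · intro a b hab
    fin_cases a <;> fin_cases b <;> simp_all
  · intro a b hab
    fin_cases a <;> fin_cases b <;>
      simp only [cycleGraph_adj] at hab <;>
      first
        | (exfalso; revert hab; decide)
        | exact h01
        | exact h12
        | exact h23
        | exact h34
        | exact h40
        | exact h01.symm
        | exact h12.symm
        | exact h23.symm
        | exact h34.symm
        | exact h40.symm

lemma comb {n : ℕ} (hn : 6 ≤ n) (G : SimpleGraph (Fin n)) [DecidableRel G.Adj]
    (hC5 : ¬ ContainsCopy (cycleGraph 5) G) (hΔ : ∀ v : Fin n, G.degree v ≤ n - 2)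
    (u : Fin n) :
    (∑ w ∈ G.neighborFinset u, G.degree w) + G.degree u * G.degree u
      ≤ G.degree u * (n + 1) + 1 := by
  classical
  set N := G.neighborFinset u with hN
  set d := N.card with hd
  have hdeg : G.degree u = d := rfl
  set W := (univ : Finset (Fin n)) \ insert u N with hWdef
  have huN : u ∉ N := by simp [hN]
  have hmemN : ∀ {x : Fin n}, x ∈ N ↔ G.Adj u x := by
    intro x; rw [hN, mem_neighborFinset]
  have hmemW : ∀ {x : Fin n}, x ∈ W ↔ (x ∉ N ∧ x ≠ u) := by
    intro x; rw [hWdef]; simp [mem_sdiff, mem_insert]; tauto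
  have huniv : insert u N ∪ W = univ := by
    rw [hWdef]; exact Finset.union_sdiff_of_subset (subset_univ _)
  have hcards : d + W.card + 1 = n := by
    have h1 : W.card = n - (d + 1) := by
      rw [hWdef, card_sdiff_of_subset (subset_univ _), card_univ, Fintype.card_fin,
        card_insert_of_notMem huN]
    have h2 : d + 1 ≤ n := by
      have h3 := card_le_univ (insert u N)
      rw [card_insert_of_notMem huN] at h3
      simpa using h3
    omega
  have hω1 : 1 ≤ W.card := by
    have := hΔ u
    rw [hdeg] at this
    omega
  -- r x = number of neighbours of x inside N ; s x = inside W
  set r : Fin n → ℕ := fun a => (G.neighborFinset a ∩ N).card with hr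
  set s : Fin n → ℕ := fun a => (G.neighborFinset a ∩ W).card with hs
  -- Step 1 : degree decomposition on N
  have hdecomp : ∀ w ∈ N, G.degree w = 1 + r w + s w := by
    intro w hw
    have humem : u ∈ G.neighborFinset w := by
      rw [mem_neighborFinset]; exact (hmemN.mp hw).symm
    have hsplit : G.neighborFinset w
        = insert u ((G.neighborFinset w ∩ N) ∪ (G.neighborFinset w ∩ W)) := by
      ext x
      simp only [mem_insert, mem_union, mem_inter]
      constructor
      · intro hx
        by_cases hxu : x = u
        · exact Or.inl hxu
        · have : x ∈ insert u N ∪ W := huniv ▸ mem_univ x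
          rcases mem_union.mp this with h | h
          · rcases mem_insert.mp h with h | h
            · exact Or.inl h
            · exact Or.inr (Or.inl ⟨hx, h⟩)
          · exact Or.inr (Or.inr ⟨hx, h⟩)
      · rintro (h | h | h)
        · exact h ▸ humem
        · exact h.1
        · exact h.1
    have hunotin : u ∉ (G.neighborFinset w ∩ N) ∪ (G.neighborFinset w ∩ W) := by
      simp only [mem_union, mem_inter, not_or, not_and_or]
      exact ⟨Or.inr huN, Or.inr (fun h => ((hmemW.mp h).2 rfl))⟩
    have hdisjNW : Disjoint (G.neighborFinset w ∩ N) (G.neighborFinset w ∩ W) := by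
      rw [Finset.disjoint_left]
      intro x hx hx'
      exact (hmemW.mp (mem_inter.mp hx').2).1 (mem_inter.mp hx).2
    rw [SimpleGraph.degree, hsplit, card_insert_of_notMem hunotin,
      card_union_of_disjoint hdisjNW]
    ring
  -- Step 3 : double counting
  have hfilterN : ∀ a : Fin n, G.neighborFinset a ∩ N = N.filter (G.Adj a) := by
    intro a; ext x; simp [mem_neighborFinset, mem_inter, mem_filter, and_comm]
  have hfilterW : ∀ a : Fin n, G.neighborFinset a ∩ W = W.filter (G.Adj a) := by
    intro a; ext x; simp [mem_neighborFinset, mem_inter, mem_filter, and_comm]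
  have hdouble : ∑ w ∈ N, s w = ∑ w ∈ W, r w := by
    have h1 : ∀ a ∈ N, s a = ∑ x ∈ W, if G.Adj a x then 1 else 0 := by
      intro a _; rw [hs]; simp only; rw [hfilterW, card_filter]
    have h2 : ∀ a ∈ W, r a = ∑ x ∈ N, if G.Adj a x then 1 else 0 := by
      intro a _; rw [hr]; simp only; rw [hfilterN, card_filter]
    rw [Finset.sum_congr rfl h1, Finset.sum_congr rfl h2, Finset.sum_comm]
    apply Finset.sum_congr rfl
    intro x _
    apply Finset.sum_congr rfl
    intro y _
    simp only [adj_comm]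
  have hrdef : ∀ a : Fin n, r a = (G.neighborFinset a ∩ N).card := fun a => rfl
  -- C5-freeness facts
  have K1 : ∀ a ∈ N, ∀ b ∈ N, G.Adj a b → 3 ≤ r a → r b = 1 := by
    intro a ha b hb hab hra
    have haInb : a ∈ G.neighborFinset b ∩ N :=
      mem_inter.mpr ⟨(mem_neighborFinset _ _ _).mpr hab.symm, ha⟩
    have hrb1 : 1 ≤ r b := by
      rw [hrdef]
      exact card_pos.mpr ⟨a, haInb⟩
    by_contra hrb
    have hrb2 : 2 ≤ r b := by omega
    obtain ⟨x, hx, hxa⟩ := Finset.exists_mem_ne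
      (s := G.neighborFinset b ∩ N) (by rw [hrdef] at hrb2; omega) a
    -- y in (nbr a ∩ N) \ {b, x}
    have hyex : ((G.neighborFinset a ∩ N) \ {b, x}).Nonempty := by
      rw [← card_pos]
      have h1 : ({b, x} : Finset (Fin n)).card ≤ 2 := (card_insert_le _ _).trans (by simp)
      have h2 := Finset.le_card_sdiff ({b, x} : Finset (Fin n)) (G.neighborFinset a ∩ N)
      rw [hrdef] at hra
      omega
    obtain ⟨y, hy⟩ := hyex
    rw [mem_sdiff, mem_insert, mem_singleton] at hy
    push_neg at hy
    obtain ⟨hyaN, hyb, hyx⟩ := hy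
    have hxN : x ∈ N := (mem_inter.mp hx).2
    have hyN : y ∈ N := (mem_inter.mp hyaN).2
    exact hC5 (containsC5 G u x b a y
      (hmemN.mp hxN)
      ((mem_neighborFinset _ _ _).mp (mem_inter.mp hx).1).symm
      hab.symm
      ((mem_neighborFinset _ _ _).mp (mem_inter.mp hyaN).1)
      (hmemN.mp hyN).symm
      (fun h => huN (h ▸ hb)) (fun h => huN (h ▸ ha)) hxa (Ne.symm hyx) (Ne.symm hyb))
  have K2 : ∀ w ∈ W, ∀ a ∈ N, ∀ b ∈ N, a ≠ b → G.Adj w a → G.Adj w b →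
      ∀ x ∈ G.neighborFinset a ∩ N, x = b := by
    intro w hw a ha b hb hne hwa hwb x hx
    by_contra hxb
    have hxN : x ∈ N := (mem_inter.mp hx).2
    have hwN : w ∉ N := (hmemW.mp hw).1
    exact hC5 (containsC5 G u x a w b
      (hmemN.mp hxN)
      ((mem_neighborFinset _ _ _).mp (mem_inter.mp hx).1).symm
      hwa.symm
      hwb
      (hmemN.mp hb).symm
      (fun h => huN (h ▸ ha)) (fun h => (hmemW.mp hw).2 h.symm)
      (fun h => hwN (h ▸ hxN)) hxb hne)
  -- classes
  set Z : Finset (Fin n) := N.filter (fun a => r a = 0) with hZ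
  set P : Finset (Fin n) :=
    N.filter (fun a => r a = 1 ∧ ∀ b ∈ G.neighborFinset a ∩ N, r b = 1) with hP
  set M : Finset (Fin n) := N \ (Z ∪ P) with hM
  have hZsub : Z ⊆ N := filter_subset _ _
  have hPsub : P ⊆ N := filter_subset _ _
  have hMsub : M ⊆ N := sdiff_subset
  have hZPdisj : Disjoint Z P := by
    rw [Finset.disjoint_left]
    intro a ha ha'
    have h1 := (mem_filter.mp ha).2
    have h2 := (mem_filter.mp ha').2.1
    omega
  have hZPN : Z ∪ P ⊆ N := union_subset hZsub hPsub
  have hcardd : M.card + (Z.card + P.card) = d := by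
    rw [hM, card_sdiff_of_subset hZPN, card_union_of_disjoint hZPdisj]
    have := card_le_card hZPN
    rw [card_union_of_disjoint hZPdisj] at this
    omega
  -- F2 : every w in W has at most one neighbour in M
  have F2 : ∀ w ∈ W, (G.neighborFinset w ∩ M).card ≤ 1 := by
    intro w hw
    by_contra hcard
    push_neg at hcard
    obtain ⟨a, ha, b, hb, hne⟩ := Finset.one_lt_card.mp hcard
    have haM : a ∈ M := (mem_inter.mp ha).2
    have hbM : b ∈ M := (mem_inter.mp hb).2
    have haN : a ∈ N := hMsub haM
    have hbN : b ∈ N := hMsub hbM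
    have hwa : G.Adj w a := (mem_neighborFinset _ _ _).mp (mem_inter.mp ha).1
    have hwb : G.Adj w b := (mem_neighborFinset _ _ _).mp (mem_inter.mp hb).1
    have hKa := K2 w hw a haN b hbN hne hwa hwb
    have hKb := K2 w hw b hbN a haN hne.symm hwb hwa
    -- a is not in Z, so its neighbourhood in N is exactly {b}
    have haZ : a ∉ Z ∪ P := (mem_sdiff.mp haM).2
    have hra0 : r a ≠ 0 := by
      intro h0
      exact haZ (mem_union_left _ (mem_filter.mpr ⟨haN, h0⟩))
    have hane : (G.neighborFinset a ∩ N).Nonempty := by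
      rw [← card_pos, ← hrdef]; omega
    have haeq : G.neighborFinset a ∩ N = {b} := by
      obtain ⟨x, hx⟩ := hane
      have hxb := hKa x hx
      refine Finset.eq_singleton_iff_unique_mem.mpr ⟨hxb ▸ hx, hKa⟩
    have hrb0 : r b ≠ 0 := by
      intro h0
      exact (mem_sdiff.mp hbM).2 (mem_union_left _ (mem_filter.mpr ⟨hbN, h0⟩))
    have hbne : (G.neighborFinset b ∩ N).Nonempty := by
      rw [← card_pos, ← hrdef]; omega
    have hbeq : G.neighborFinset b ∩ N = {a} := by
      obtain ⟨x, hx⟩ := hbne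
      have hxa := hKb x hx
      refine Finset.eq_singleton_iff_unique_mem.mpr ⟨hxa ▸ hx, hKb⟩
    have hra1 : r a = 1 := by rw [hrdef, haeq, card_singleton]
    have hrb1 : r b = 1 := by rw [hrdef, hbeq, card_singleton]
    apply haZ
    apply mem_union_right
    refine mem_filter.mpr ⟨haN, hra1, ?_⟩
    intro c hc
    rw [haeq, mem_singleton] at hc
    rw [hc]
    exact hrb1
  -- F1 : sum of r over M is at most 2 |M|
  have F1 : ∑ a ∈ M, r a ≤ 2 * M.card := by
    set L : Finset (Fin n) := M.filter (fun b => r b = 1) with hL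
    set Mp : Finset (Fin n) := M.filter (fun a => 3 ≤ r a) with hMp
    have hLM : L ⊆ M := filter_subset _ _
    have hMpM : Mp ⊆ M := filter_subset _ _
    -- pairwise disjoint neighbourhoods for Mp
    have hdisj : ∀ a ∈ Mp, ∀ a' ∈ Mp, a ≠ a' →
        Disjoint (G.neighborFinset a ∩ N) (G.neighborFinset a' ∩ N) := by
      intro a ha a' ha' hne
      rw [Finset.disjoint_left]
      intro b hb hb'
      have haN : a ∈ N := hMsub (hMpM ha)
      have haN' : a' ∈ N := hMsub (hMpM ha')
      have hbN : b ∈ N := (mem_inter.mp hb).2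
      have hab : G.Adj a b := (mem_neighborFinset _ _ _).mp (mem_inter.mp hb).1
      have hab' : G.Adj a' b := (mem_neighborFinset _ _ _).mp (mem_inter.mp hb').1
      have hrb : r b = 1 := K1 a haN b hbN hab (mem_filter.mp ha).2
      have hsubs : ({a, a'} : Finset (Fin n)) ⊆ G.neighborFinset b ∩ N := by
        intro x hx
        rcases mem_insert.mp hx with h | h
        · subst h
          exact mem_inter.mpr ⟨(mem_neighborFinset _ _ _).mpr hab.symm, haN⟩
        · rw [mem_singleton] at h
          subst h
          exact mem_inter.mpr ⟨(mem_neighborFinset _ _ _).mpr hab'.symm, haN'⟩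
      have h2 := card_le_card hsubs
      rw [card_insert_of_notMem (by simpa using hne), card_singleton, ← hrdef] at h2
      omega
    have hsum_bi : ∑ a ∈ Mp, r a = (Mp.biUnion (fun a => G.neighborFinset a ∩ N)).card := by
      rw [Finset.card_biUnion hdisj]
    have hsubL : Mp.biUnion (fun a => G.neighborFinset a ∩ N) ⊆ L := by
      intro b hb
      obtain ⟨a, haMp, hbmem⟩ := Finset.mem_biUnion.mp hb
      have haN : a ∈ N := hMsub (hMpM haMp)
      have hbN : b ∈ N := (mem_inter.mp hbmem).2
      have hab : G.Adj a b := (mem_neighborFinset _ _ _).mp (mem_inter.mp hbmem).1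
      have hra3 : 3 ≤ r a := (mem_filter.mp haMp).2
      have hrb : r b = 1 := K1 a haN b hbN hab hra3
      have hbZ : b ∉ Z := by
        intro h
        have := (mem_filter.mp h).2
        omega
      have hbP : b ∉ P := by
        intro h
        have h2 := (mem_filter.mp h).2.2 a
          (mem_inter.mpr ⟨(mem_neighborFinset _ _ _).mpr hab.symm, haN⟩)
        omega
      refine mem_filter.mpr ⟨?_, hrb⟩
      rw [hM, mem_sdiff]
      exact ⟨hbN, fun h => (mem_union.mp h).elim hbZ hbP⟩
    have hMpbound : ∑ a ∈ Mp, r a ≤ L.card := by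
      rw [hsum_bi]
      exact card_le_card hsubL
    have hLMp : Disjoint L Mp := by
      rw [Finset.disjoint_left]
      intro a ha ha'
      have h1 := (mem_filter.mp ha).2
      have h2 := (mem_filter.mp ha').2
      omega
    have hLsub2 : L ⊆ M \ Mp := by
      intro a ha
      rw [mem_sdiff]
      exact ⟨hLM ha, fun h => (Finset.disjoint_left.mp hLMp) ha h⟩
    have hsplit1 : ∑ a ∈ M \ Mp, r a + ∑ a ∈ Mp, r a = ∑ a ∈ M, r a :=
      Finset.sum_sdiff hMpM
    have hsplit2 : ∑ a ∈ (M \ Mp) \ L, r a + ∑ a ∈ L, r a = ∑ a ∈ M \ Mp, r a :=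
      Finset.sum_sdiff hLsub2
    have hLsum : ∑ a ∈ L, r a = L.card := by
      rw [Finset.sum_congr rfl (fun a ha => (mem_filter.mp ha).2), Finset.sum_const,
        smul_eq_mul, mul_one]
    have hrest : ∑ a ∈ (M \ Mp) \ L, r a ≤ ((M \ Mp) \ L).card * 2 := by
      have := Finset.sum_le_card_nsmul ((M \ Mp) \ L) r 2 ?_
      · simpa using this
      · intro a ha
        have haM : a ∈ M := (mem_sdiff.mp (mem_sdiff.mp ha).1).1
        have haMp : a ∉ Mp := (mem_sdiff.mp (mem_sdiff.mp ha).1).2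
        have : ¬ 3 ≤ r a := fun h => haMp (mem_filter.mpr ⟨haM, h⟩)
        omega
    have hc1 : ((M \ Mp) \ L).card = M.card - Mp.card - L.card := by
      rw [card_sdiff_of_subset hLsub2, card_sdiff_of_subset hMpM]
    have hc2 : Mp.card ≤ M.card := card_le_card hMpM
    have hc3 : L.card ≤ (M \ Mp).card := card_le_card hLsub2
    rw [card_sdiff_of_subset hMpM] at hc3
    omega
  -- sums over N
  have hZzero : ∀ a ∈ Z, r a = 0 := fun a ha => (mem_filter.mp ha).2
  have hPone : ∀ a ∈ P, r a = 1 := fun a ha => (mem_filter.mp ha).2.1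
  have hNdecomp : (Z ∪ P) ∪ M = N := by
    rw [hM]
    exact Finset.union_sdiff_of_subset hZPN
  have hNsum : ∑ w ∈ N, r w ≤ P.card + 2 * M.card := by
    have h1 : ∑ a ∈ M, r a + ∑ a ∈ Z ∪ P, r a = ∑ a ∈ N, r a := by
      rw [hM]; exact Finset.sum_sdiff hZPN
    have h2 : ∑ a ∈ Z ∪ P, r a = ∑ a ∈ Z, r a + ∑ a ∈ P, r a :=
      Finset.sum_union hZPdisj
    have h3 : ∑ a ∈ Z, r a = 0 := Finset.sum_eq_zero hZzero
    have h4 : ∑ a ∈ P, r a = P.card := by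
      rw [Finset.sum_congr rfl hPone, Finset.sum_const, smul_eq_mul, mul_one]
    omega
  -- degree sum decomposition
  have hsumN_deg : ∑ w ∈ N, G.degree w = d + (∑ w ∈ N, r w) + (∑ w ∈ W, r w) := by
    rw [Finset.sum_congr rfl hdecomp, Finset.sum_add_distrib, Finset.sum_add_distrib,
      Finset.sum_const, smul_eq_mul, mul_one, hdouble]
  -- sums over W, in two cases
  rw [hdeg, hsumN_deg]
  have e0 : d * (n + 1) = d * d + d * (W.card) + 2 * d := by
    have hn1 : n + 1 = d + W.card + 2 := by omega
    rw [hn1]; ring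
  by_cases hMe : M = ∅
  · have hm0 : M.card = 0 := by rw [hMe]; rfl
    have hZPeq : Z ∪ P = N := by
      rw [← hNdecomp, hMe, union_empty]
    have hrw : ∀ w ∈ W, r w ≤ Z.card + P.card := by
      intro w hw
      rw [hrdef, ← card_union_of_disjoint hZPdisj]
      apply card_le_card
      rw [hZPeq]
      exact inter_subset_right
    have hWsum : ∑ w ∈ W, r w ≤ W.card * (Z.card + P.card) := by
      have := Finset.sum_le_card_nsmul W r (Z.card + P.card) hrw
      simpa using this
    have e1 : W.card * (Z.card + P.card) = d * W.card := by
      have : Z.card + P.card = d := by omega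
      rw [this]; ring
    rw [e1] at hWsum
    have hP : P.card ≤ d := by omega
    have hM2 : 2 * M.card = 0 := by omega
    linarith [hNsum, hWsum, e0]
  · have hm1 : 1 ≤ M.card := by
      rw [Nat.one_le_iff_ne_zero]
      simpa [Finset.card_eq_zero] using hMe
    have hrw : ∀ w ∈ W, r w ≤ Z.card + P.card + 1 := by
      intro w hw
      rw [hrdef]
      have hsplit : G.neighborFinset w ∩ N
          = (G.neighborFinset w ∩ (Z ∪ P)) ∪ (G.neighborFinset w ∩ M) := by
        rw [← hNdecomp]
        exact Finset.inter_union_distrib_left _ _ _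
      rw [hsplit]
      calc ((G.neighborFinset w ∩ (Z ∪ P)) ∪ (G.neighborFinset w ∩ M)).card
          ≤ (G.neighborFinset w ∩ (Z ∪ P)).card + (G.neighborFinset w ∩ M).card :=
            card_union_le _ _
        _ ≤ (Z.card + P.card) + 1 := by
            have h1 : (G.neighborFinset w ∩ (Z ∪ P)).card ≤ Z.card + P.card := by
              rw [← card_union_of_disjoint hZPdisj]
              exact card_le_card inter_subset_right
            have h2 := F2 w hw
            omega
    have hWsum : ∑ w ∈ W, r w ≤ W.card * (Z.card + P.card + 1) := by
      have := Finset.sum_le_card_nsmul W r (Z.card + P.card + 1) hrw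
      simpa using this
    -- key product inequality
    obtain ⟨m', hm'⟩ : ∃ m', M.card = m' + 1 := ⟨M.card - 1, by omega⟩
    obtain ⟨w', hw'⟩ : ∃ w', W.card = w' + 1 := ⟨W.card - 1, by omega⟩
    have key : M.card + W.card ≤ M.card * W.card + Z.card + 1 := by
      rw [hm', hw']
      have hexp : (m' + 1) * (w' + 1) = m' * w' + m' + w' + 1 := by ring
      have := Nat.zero_le (m' * w')
      omega
    have e1 : d * W.card = Z.card * W.card + P.card * W.card + M.card * W.card := by
      have hzd : Z.card + P.card + M.card = d := by omega
      rw [← hzd]; ring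
    have e2 : W.card * (Z.card + P.card + 1)
        = Z.card * W.card + P.card * W.card + W.card := by ring
    rw [e2] at hWsum
    linarith [hNsum, hWsum, e0, key, e1]

lemma spec_le {n : ℕ} (hn : 0 < n) (H : SimpleGraph (Fin n)) [DecidableRel H.Adj] {μ : ℝ}
    (hμ : μ ∈ spectrum ℝ (signlessLaplacian H)) : μ ≤ 2 * n := by
  obtain ⟨u, hu⟩ := eig_bound hn H hμ
  have hdn : H.degree u ≤ n := by
    exact (card_le_univ (H.neighborFinset u)).trans_eq (Fintype.card_fin n)
  have hdle : (H.degree u : ℝ) ≤ n := by exact_mod_cast hdn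
  have hSle : (∑ w ∈ H.neighborFinset u, (H.degree w : ℝ)) ≤ (H.degree u : ℝ) * n := by
    calc (∑ w ∈ H.neighborFinset u, (H.degree w : ℝ))
        ≤ ∑ _w ∈ H.neighborFinset u, (n : ℝ) := by
          refine Finset.sum_le_sum fun w _ => ?_
          have h : H.degree w ≤ n := by
            exact (card_le_univ (H.neighborFinset w)).trans_eq (Fintype.card_fin n)
          exact_mod_cast h
      _ = (H.degree u : ℝ) * n := by
          rw [Finset.sum_const, nsmul_eq_mul]
          rfl
  have hmaxpos : (0 : ℝ) < max (H.degree u : ℝ) 1 := lt_max_of_lt_right one_pos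
  have hdiv : (∑ w ∈ H.neighborFinset u, (H.degree w : ℝ)) / max (H.degree u : ℝ) 1
      ≤ (n : ℝ) := by
    rw [div_le_iff₀ hmaxpos]
    calc (∑ w ∈ H.neighborFinset u, (H.degree w : ℝ))
        ≤ (H.degree u : ℝ) * n := hSle
      _ ≤ (max (H.degree u : ℝ) 1) * n :=
          mul_le_mul_of_nonneg_right (le_max_left _ _) (by positivity)
      _ = (n : ℝ) * max (H.degree u : ℝ) 1 := by ring
  linarith

/-- If `G` has order `n ≥ 6`, no `C₅` as a subgraph, and maximum degree at most
`n - 2`, then `q(G) < q(S_{n,2})`. -/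
theorem stmt_15 (n : ℕ) (hn : 6 ≤ n) (G : SimpleGraph (Fin n)) [DecidableRel G.Adj]
    (hC5 : ¬ ContainsCopy (cycleGraph 5) G)
    (hΔ : ∀ v : Fin n, G.degree v ≤ n - 2) :
    qIndex G < qIndex (sGraph n 2) := by
  classical
  have hn0 : 0 < n := by omega
  have hnR : (6 : ℝ) ≤ (n : ℝ) := by exact_mod_cast hn
  -- upper bound for q(G)
  have hub : ∀ μ ∈ spectrum ℝ (signlessLaplacian G), μ ≤ (n : ℝ) + 5/4 := by
    intro μ hμ
    obtain ⟨u, hu⟩ := eig_bound hn0 G hμ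
    set D := G.degree u with hD
    set S := ∑ w ∈ G.neighborFinset u, G.degree w with hS
    have hcast : (∑ w ∈ G.neighborFinset u, (G.degree w : ℝ)) = (S : ℝ) := by
      rw [hS]; push_cast; ring
    rw [hcast] at hu
    rcases Nat.eq_zero_or_pos D with hD0 | hDpos
    · -- no neighbours
      have hempty : G.neighborFinset u = ∅ := by
        rw [← Finset.card_eq_zero]; exact hD0
      have hS0 : S = 0 := by rw [hS, hempty, Finset.sum_empty]
      rw [hD0, hS0] at hu
      simp at hu
      linarith
    · have hDposR : (0 : ℝ) < (D : ℝ) := by exact_mod_cast hDpos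
      have hmax : max (D : ℝ) 1 = (D : ℝ) := by
        apply max_eq_left
        exact_mod_cast hDpos
      rw [hmax] at hu
      by_cases hD3 : D ≤ 3
      · -- small degree : use trivial bound via Δ ≤ n - 2
        have hSb : S ≤ D * (n - 2) := by
          rw [hS]
          have h := Finset.sum_le_card_nsmul (G.neighborFinset u)
            (fun w => G.degree w) (n - 2) (fun w _ => hΔ w)
          simpa [smul_eq_mul] using h
        have hSbR : (S : ℝ) ≤ (D : ℝ) * ((n : ℝ) - 2) := by
          have h2 : ((n - 2 : ℕ) : ℝ) = (n : ℝ) - 2 := by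
            rw [Nat.cast_sub (by omega)]; norm_num
          calc (S : ℝ) ≤ ((D * (n - 2) : ℕ) : ℝ) := by exact_mod_cast hSb
            _ = (D : ℝ) * ((n : ℝ) - 2) := by push_cast [h2]; ring
        have hdiv : (S : ℝ) / (D : ℝ) ≤ (n : ℝ) - 2 := by
          rw [div_le_iff₀ hDposR]
          calc (S : ℝ) ≤ (D : ℝ) * ((n : ℝ) - 2) := hSbR
            _ = ((n : ℝ) - 2) * (D : ℝ) := by ring
        have hD3R : (D : ℝ) ≤ 3 := by exact_mod_cast hD3
        linarith
      · -- large degree : use the combinatorial lemma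
        push_neg at hD3
        have hD4R : (4 : ℝ) ≤ (D : ℝ) := by exact_mod_cast hD3
        have hcomb := comb hn G hC5 hΔ u
        rw [← hS, ← hD] at hcomb
        have hcombR : (S : ℝ) + (D : ℝ) * (D : ℝ) ≤ (D : ℝ) * ((n : ℝ) + 1) + 1 := by
          have := hcomb
          have h1 : ((S + D * D : ℕ) : ℝ) ≤ ((D * (n + 1) + 1 : ℕ) : ℝ) := by
            exact_mod_cast this
          push_cast at h1
          linarith
        have hdiv : (S : ℝ) / (D : ℝ) ≤ (n : ℝ) + 1 + 1 / (D : ℝ) - (D : ℝ) := by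
          rw [div_le_iff₀ hDposR]
          have hexp : ((n : ℝ) + 1 + 1 / (D : ℝ) - (D : ℝ)) * (D : ℝ)
              = (D : ℝ) * ((n : ℝ) + 1) + 1 - (D : ℝ) * (D : ℝ) := by
            field_simp
          rw [hexp]
          linarith
        have hinv : 1 / (D : ℝ) ≤ 1 / 4 := by
          apply one_div_le_one_div_of_le
          · norm_num
          · exact hD4R
        linarith
  have hq1 : qIndex G ≤ (n : ℝ) + 5/4 := by
    apply Real.sSup_le hub
    positivity
  -- lower bound for q(S_{n,2})
  set l : ℝ := ((n : ℝ) + 2 + Real.sqrt (((n : ℝ) + 2) ^ 2 - 16)) / 2 with hl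
  have hsqrt : (n : ℝ) + 1/2 < Real.sqrt (((n : ℝ) + 2) ^ 2 - 16) := by
    rw [show ((n : ℝ) + 1/2) = Real.sqrt (((n : ℝ) + 1/2)^2) from
      (Real.sqrt_sq (by positivity)).symm]
    apply Real.sqrt_lt_sqrt (by positivity)
    nlinarith
  have hlgt : (n : ℝ) + 5/4 < l := by
    rw [hl]
    linarith
  have hbdd : BddAbove (spectrum ℝ (signlessLaplacian (sGraph n 2))) :=
    ⟨2 * n, fun μ hμ => spec_le hn0 (sGraph n 2) hμ⟩
  have hq2 : l ≤ qIndex (sGraph n 2) := le_csSup hbdd (sGraph_eig hn)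
  calc qIndex G ≤ (n : ℝ) + 5/4 := hq1
    _ < l := hlgt
    _ ≤ qIndex (sGraph n 2) := hq2
end

section
/- Let G be a simple graph of order n and let u be a vertex of G with degree d(u) ≥ 1. If d(u) + (1/d(u))·Σ_{v ∈ Γ(u)} d(v) ≥ n + 2 - 4/(n+1), then the number of edges of G inside the neighborhood Γ(u) satisfies e(Γ(u)) ≥ d(u) - 1. -/
open SimpleGraph

/-- If `G` has order `n`, `u` is a vertex with `d(u) ≥ 1`, and
`d(u) + (1/d(u)) ∑_{v ∈ Γ(u)} d(v) ≥ n + 2 - 4/(n+1)`, then `e(Γ(u)) ≥ d(u) - 1`. -/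
theorem stmt_16 (n : ℕ) (G : SimpleGraph (Fin n)) [DecidableRel G.Adj]
    (u : Fin n) (hd : 1 ≤ G.degree u)
    (h : (n : ℝ) + 2 - 4 / ((n : ℝ) + 1) ≤
        (G.degree u : ℝ) +
          (1 / (G.degree u : ℝ)) * ∑ v ∈ G.neighborFinset u, (G.degree v : ℝ)) :
    G.degree u - 1 ≤ edgesWithin G (G.neighborFinset u) := by
  set d := G.degree u with hd'
  set N := G.neighborFinset u with hN
  have hNcard : N.card = d := G.card_neighborFinset_eq_degree u
  have huN : u ∉ N := by simp [hN]
  set s : Finset (Fin n × Fin n) := (N ×ˢ N).filter (fun p => G.Adj p.1 p.2) with hs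
  have hmem : ∀ p : Fin n × Fin n, p ∈ s ↔ p.1 ∈ N ∧ p.2 ∈ N ∧ G.Adj p.1 p.2 := by
    intro p; simp [hs, Finset.mem_filter, Finset.mem_product, and_assoc]
  have hE : edgesBetween G N N = s.card := by
    unfold edgesBetween
    rw [Finset.filter_congr_decidable]
  -- evenness
  obtain ⟨a, ha⟩ : Even s.card := by
    have h1 : s = s.filter (fun p => p.1 < p.2) ∪ s.filter (fun p => p.2 < p.1) := by
      ext p
      simp only [Finset.mem_union, Finset.mem_filter]
      constructor
      · intro hp
        have hadj := ((hmem p).1 hp).2.2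
        rcases lt_or_gt_of_ne hadj.ne with hlt | hlt
        · exact Or.inl ⟨hp, hlt⟩
        · exact Or.inr ⟨hp, hlt⟩
      · rintro (⟨hp, _⟩ | ⟨hp, _⟩) <;> exact hp
    have hdisj : Disjoint (s.filter (fun p => p.1 < p.2)) (s.filter (fun p => p.2 < p.1)) := by
      rw [Finset.disjoint_left]
      intro p hp hq
      exact absurd ((Finset.mem_filter.mp hq).2) (not_lt.mpr (le_of_lt (Finset.mem_filter.mp hp).2))
    have hcardeq : (s.filter (fun p => p.1 < p.2)).card = (s.filter (fun p => p.2 < p.1)).card := by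
      apply Finset.card_bij (fun p _ => p.swap)
      · intro p hp
        obtain ⟨hp1, hlt⟩ := Finset.mem_filter.mp hp
        obtain ⟨h1, h2, h3⟩ := (hmem p).1 hp1
        exact Finset.mem_filter.mpr ⟨(hmem p.swap).2 ⟨h2, h1, h3.symm⟩, hlt⟩
      · intro p _ q _ hpq
        exact Prod.swap_injective hpq
      · intro p hp
        obtain ⟨hp1, hlt⟩ := Finset.mem_filter.mp hp
        obtain ⟨h1, h2, h3⟩ := (hmem p).1 hp1
        exact ⟨p.swap, Finset.mem_filter.mpr ⟨(hmem p.swap).2 ⟨h2, h1, h3.symm⟩, hlt⟩, rfl⟩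
    have hcu : s.card = (s.filter (fun p => p.1 < p.2)).card + (s.filter (fun p => p.2 < p.1)).card := by
      conv_lhs => rw [h1]
      exact Finset.card_union_of_disjoint hdisj
    exact ⟨(s.filter (fun p => p.1 < p.2)).card, by omega⟩
  -- degree sum decomposition
  set rest : Finset (Fin n) := Finset.univ \ insert u N with hrest
  have hdn : d < n := by
    have := G.degree_lt_card_verts u
    simpa [Fintype.card_fin] using this
  have hrestcard : rest.card = n - (d + 1) := by
    rw [hrest, Finset.card_sdiff_of_subset (Finset.subset_univ _),
      Finset.card_insert_of_notMem huN, hNcard, Finset.card_univ, Fintype.card_fin]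
  have hdeg : ∀ v ∈ N, G.degree v =
      (N.filter (G.Adj v)).card + 1 + (rest.filter (G.Adj v)).card := by
    intro v hv
    have hvu : G.Adj v u := (G.mem_neighborFinset u v).1 hv |>.symm
    have hsplit : (Finset.univ : Finset (Fin n)) = insert u N ∪ rest := by
      rw [hrest, Finset.union_sdiff_of_subset (Finset.subset_univ _)]
    have hdisj2 : Disjoint (insert u N) rest := Finset.disjoint_sdiff
    rw [← G.card_neighborFinset_eq_degree, neighborFinset_eq_filter, hsplit,
      Finset.filter_union, Finset.card_union_of_disjoint (Finset.disjoint_filter_filter hdisj2),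
      Finset.filter_insert, if_pos hvu,
      Finset.card_insert_of_notMem (fun hc => huN (Finset.mem_filter.mp hc).1)]
  have hsum : ∑ v ∈ N, G.degree v =
      s.card + d + ∑ v ∈ N, (rest.filter (G.Adj v)).card := by
    have hsc : s.card = ∑ v ∈ N, (N.filter (G.Adj v)).card := by
      rw [hs, Finset.card_filter, Finset.sum_product]
      exact Finset.sum_congr rfl fun v _ => (Finset.card_filter _ _).symm
    rw [Finset.sum_congr rfl hdeg, Finset.sum_add_distrib, Finset.sum_add_distrib,
      Finset.sum_const, smul_eq_mul, mul_one, hNcard, hsc]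
  have hR : ∑ v ∈ N, (rest.filter (G.Adj v)).card ≤ d * (n - (d + 1)) := by
    calc ∑ v ∈ N, (rest.filter (G.Adj v)).card ≤ ∑ v ∈ N, rest.card :=
          Finset.sum_le_sum fun v _ => Finset.card_filter_le _ _
      _ = d * (n - (d + 1)) := by rw [Finset.sum_const, smul_eq_mul, hNcard, hrestcard]
  -- reals
  have hD0 : (0 : ℝ) < (d : ℝ) := by exact_mod_cast hd
  have hSr : (↑(∑ v ∈ N, G.degree v) : ℝ) = (s.card : ℝ) + d + ↑(∑ v ∈ N, (rest.filter (G.Adj v)).card) := by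
    exact_mod_cast congrArg (Nat.cast : ℕ → ℝ) hsum
  have hRr : (↑(∑ v ∈ N, (rest.filter (G.Adj v)).card) : ℝ) ≤ (d : ℝ) * ((n : ℝ) - (d : ℝ) - 1) := by
    have h1 : (↑(∑ v ∈ N, (rest.filter (G.Adj v)).card) : ℝ) ≤ (↑(d * (n - (d + 1))) : ℝ) := by
      exact_mod_cast hR
    have h2 : (↑(d * (n - (d + 1))) : ℝ) = (d : ℝ) * ((n : ℝ) - (d : ℝ) - 1) := by
      have : d + 1 ≤ n := hdn
      push_cast [Nat.cast_sub this]
      ring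
    rw [h2] at h1; exact h1
  have hcast : ∑ v ∈ N, (G.degree v : ℝ) = (↑(∑ v ∈ N, G.degree v) : ℝ) := by push_cast; rfl
  rw [hcast] at h
  set Sr := (↑(∑ v ∈ N, G.degree v) : ℝ) with hSrdef
  have hmul : ((n : ℝ) + 2 - 4 / ((n : ℝ) + 1)) * (d : ℝ) ≤ (d : ℝ) * (d : ℝ) + Sr := by
    have := mul_le_mul_of_nonneg_right h hD0.le
    have hfs : (1 / (d : ℝ)) * Sr * (d : ℝ) = Sr := by field_simp
    nlinarith [this, hfs]
  have hn1 : (0 : ℝ) < (n : ℝ) + 1 := by positivity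
  have hdiv : 4 * (d : ℝ) / ((n : ℝ) + 1) < 4 := by
    rw [div_lt_iff₀ hn1]
    have : (d : ℝ) < (n : ℝ) + 1 := by exact_mod_cast Nat.lt_succ_of_lt hdn
    nlinarith
  have hRr2 : (↑(∑ v ∈ N, (rest.filter (G.Adj v)).card) : ℝ) ≤
      (d : ℝ) * (n : ℝ) - (d : ℝ) * (d : ℝ) - (d : ℝ) := by
    rw [show (d : ℝ) * (n : ℝ) - (d : ℝ) * (d : ℝ) - (d : ℝ) =
      (d : ℝ) * ((n : ℝ) - (d : ℝ) - 1) from by ring]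
    exact hRr
  have hmul2 : (n : ℝ) * d + 2 * d - 4 * (d : ℝ) / ((n : ℝ) + 1) ≤ (d : ℝ) * d + Sr := by
    calc (n : ℝ) * d + 2 * d - 4 * (d : ℝ) / ((n : ℝ) + 1)
        = ((n : ℝ) + 2 - 4 / ((n : ℝ) + 1)) * d := by ring
      _ ≤ (d : ℝ) * d + Sr := hmul
  have hEr : 2 * (d : ℝ) - 4 * (d : ℝ) / ((n : ℝ) + 1) ≤ (s.card : ℝ) := by
    linarith [hmul2, hSr, hRr2]
  have hfin : (2 * (d : ℝ)) - 4 < (s.card : ℝ) := by linarith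
  -- conclude in ℕ
  have hsa : s.card = 2 * a := by omega
  have hda : d ≤ a + 1 := by
    have : (2 * (d : ℝ)) - 4 < (2 * a : ℝ) := by rw [hsa] at hfin; exact_mod_cast hfin
    have : 2 * d < 2 * a + 4 := by exact_mod_cast (by linarith : (2 * d : ℝ) < 2 * a + 4)
    omega
  have hEW : edgesWithin G N = a := by
    unfold edgesWithin
    rw [hE, hsa]
    omega
  rw [hEW]
  omega
end
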